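/- Let n ≥ 2. A matrix A ∈ 𝒜(n,2) achieves the maximal permanent among matrices in 𝒜(n,2) if and only if its rows and columns can be permuted to yield: J_2 ⊕ J_2 ⊕ ⋯ ⊕ J_2 (n/2 copies of J_2) when n is even, and (J_3 − I_3) ⊕ J_2 ⊕ ⋯ ⊕ J_2 ((n−3)/2 copies of J_2) when n is odd. -/

import Mathlib

open scoped BigOperators

namespace BGM

/-- The permanent of a square matrix with natural number entries. -/
def perm {n : ℕ} (M : Matrix (Fin n) (Fin n) ℕ) : ℕ :=
  ∑ φ : Equiv.Perm (Fin n), ∏ i, M i (φ i)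

/-- `M` is a (0,1)-matrix. -/
def IsZeroOne {n : ℕ} (M : Matrix (Fin n) (Fin n) ℕ) : Prop :=
  ∀ i j, M i j = 0 ∨ M i j = 1

/-- The number of entries of `M` equal to `0`. -/
def zeroCount {n : ℕ} (M : Matrix (Fin n) (Fin n) ℕ) : ℕ :=
  (Finset.univ.filter fun p : Fin n × Fin n => M p.1 p.2 = 0).card

/-- `𝒰(n, τ)`: the n×n (0,1)-matrices with exactly τ zero entries. -/
def Uclass (n τ : ℕ) : Set (Matrix (Fin n) (Fin n) ℕ) :=
  {M | IsZeroOne M ∧ zeroCount M = τ}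

/-- `μ(n, τ) = max {per A : A ∈ 𝒰(n, τ)}`. -/
noncomputable def mu (n τ : ℕ) : ℕ :=
  sSup (perm '' Uclass n τ)

/-- `𝒜(n, k)`: the n×n (0,1)-matrices with exactly k ones in each row and column. -/
def Aclass (n k : ℕ) : Set (Matrix (Fin n) (Fin n) ℕ) :=
  {M | IsZeroOne M ∧ (∀ i, ∑ j, M i j = k) ∧ (∀ j, ∑ i, M i j = k)}

/-- `P` is a permutation matrix. -/
def IsPermMatrix {n : ℕ} (P : Matrix (Fin n) (Fin n) ℕ) : Prop :=
  ∃ e : Equiv.Perm (Fin n), ∀ i j, P i j = if j = e i then 1 else 0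

/-- `A` and `B` are combinatorially equivalent: `B = PAQ` or `B = PAᵀQ` for
permutation matrices `P`, `Q`. -/
def CombEquiv {n : ℕ} (A B : Matrix (Fin n) (Fin n) ℕ) : Prop :=
  ∃ P Q, IsPermMatrix P ∧ IsPermMatrix Q ∧ (B = P * A * Q ∨ B = P * A.transpose * Q)

/-- Index of the block (of consecutive sizes `L`) containing position `i`. -/
def blockIdx : List ℕ → ℕ → ℕ
  | [], _ => 0
  | s :: L, i => if i < s then 0 else blockIdx L (i - s) + 1

/-- The n×n block-diagonal direct sum of all-ones blocks of sizes `L`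
(with `L.sum = n`). -/
def listBlocks (n : ℕ) (L : List ℕ) : Matrix (Fin n) (Fin n) ℕ :=
  Matrix.of fun i j => if blockIdx L (i : ℕ) = blockIdx L (j : ℕ) then 1 else 0

/-- The n×n block-diagonal matrix with a head block `B` (of size `m`) followed by
all-ones blocks of sizes `L` (with `m + L.sum = n`). -/
def headBlocks (n : ℕ) {m : ℕ} (B : Matrix (Fin m) (Fin m) ℕ) (L : List ℕ) :
    Matrix (Fin n) (Fin n) ℕ :=
  Matrix.of fun i j =>
    if h : (i : ℕ) < m ∧ (j : ℕ) < m then B ⟨(i : ℕ), h.1⟩ ⟨(j : ℕ), h.2⟩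
    else if m ≤ (i : ℕ) ∧ m ≤ (j : ℕ) ∧
        blockIdx L ((i : ℕ) - m) = blockIdx L ((j : ℕ) - m) then 1 else 0

/-- `M` with the `(i0, j0)` entry changed to `1`. -/
def setOne {n : ℕ} (M : Matrix (Fin n) (Fin n) ℕ) (i0 j0 : Fin n) :
    Matrix (Fin n) (Fin n) ℕ :=
  Matrix.of fun i j => if i = i0 ∧ j = j0 then 1 else M i j

/-- `J₃ - I₃`. -/
def J3mI3 : Matrix (Fin 3) (Fin 3) ℕ := Matrix.of fun i j => if i = j then 0 else 1

/-- `J₄ - I₄`. -/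
def J4mI4 : Matrix (Fin 4) (Fin 4) ℕ := Matrix.of fun i j => if i = j then 0 else 1

/-- `A₃`: the 3×3 all-ones matrix except the (1,1) entry is 0. -/
def A3 : Matrix (Fin 3) (Fin 3) ℕ := Matrix.of fun i j => if i = 0 ∧ j = 0 then 0 else 1

/-- `A₃ ⊕ I₂`. -/
def V5 : Matrix (Fin 5) (Fin 5) ℕ :=
  !![0,1,1,0,0; 1,1,1,0,0; 1,1,1,0,0; 0,0,0,1,0; 0,0,0,0,1]

/-- `J₃ ⊕ I₂`. -/
def S5 : Matrix (Fin 5) (Fin 5) ℕ :=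
  !![1,1,1,0,0; 1,1,1,0,0; 1,1,1,0,0; 0,0,0,1,0; 0,0,0,0,1]

/-- The head block of `W`. -/
def BW : Matrix (Fin 4) (Fin 4) ℕ :=
  !![0,0,1,1; 1,1,0,1; 1,1,1,0; 1,1,0,1]

/-- The head block of `X`. -/
def BX : Matrix (Fin 4) (Fin 4) ℕ :=
  !![0,0,1,1; 1,0,1,1; 1,1,0,1; 1,1,1,0]

/-- The head block of `Y`. -/
def BY : Matrix (Fin 4) (Fin 4) ℕ :=
  !![0,0,1,1; 1,0,1,1; 1,1,0,0; 1,1,1,1]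

/-- `A₃ ⊕ I₁`. -/
def T4 : Matrix (Fin 4) (Fin 4) ℕ :=
  !![0,1,1,0; 1,1,1,0; 1,1,1,0; 0,0,0,1]

/-- `A₄ ⊕ J₂`, where `A₄` is `J₄` with the (1,1) entry changed to 0. -/
def Q6 : Matrix (Fin 6) (Fin 6) ℕ :=
  !![0,1,1,1,0,0; 1,1,1,1,0,0; 1,1,1,1,0,0; 1,1,1,1,0,0; 0,0,0,0,1,1; 0,0,0,0,1,1]

/-- `J₃ ⊕ I₁`. -/
def M4 : Matrix (Fin 4) (Fin 4) ℕ :=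
  !![1,1,1,0; 1,1,1,0; 1,1,1,0; 0,0,0,1]


section Aux
open Equiv Equiv.Perm
variable {n : ℕ}

def permMat {n : ℕ} (e : Equiv.Perm (Fin n)) : Matrix (Fin n) (Fin n) ℕ :=
  Matrix.of fun i j => if j = e i then 1 else 0

lemma isPermMatrix_permMat {n : ℕ} (e : Equiv.Perm (Fin n)) : IsPermMatrix (permMat e) :=
  ⟨e, fun _ _ => rfl⟩

lemma permMat_mul_apply {n : ℕ} (e : Equiv.Perm (Fin n)) (M : Matrix (Fin n) (Fin n) ℕ)
    (i j : Fin n) : (permMat e * M) i j = M (e i) j := by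
  simp [permMat, Matrix.mul_apply]

lemma mul_permMat_apply {n : ℕ} (M : Matrix (Fin n) (Fin n) ℕ) (e : Equiv.Perm (Fin n))
    (i j : Fin n) : (M * permMat e) i j = M i (e.symm j) := by
  simp only [Matrix.mul_apply, permMat, Matrix.of_apply, mul_ite, mul_one, mul_zero]
  have : ∀ x : Fin n, (j = e x) = (x = e.symm j) := by
    intro x; simp [Equiv.eq_symm_apply, eq_comm]
  simp only [this]
  rw [Finset.sum_ite_eq' Finset.univ (e.symm j) (fun x => M i x)]
  simp

lemma permMat_mul_mul_apply {n : ℕ} (u v : Equiv.Perm (Fin n))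
    (M : Matrix (Fin n) (Fin n) ℕ) (i j : Fin n) :
    (permMat u * M * permMat v) i j = M (u i) (v.symm j) := by
  rw [mul_permMat_apply, permMat_mul_apply]

lemma perm_permMat_mul {n : ℕ} (e : Equiv.Perm (Fin n)) (M : Matrix (Fin n) (Fin n) ℕ) :
    perm (permMat e * M) = perm M := by
  unfold perm
  have h : ∀ φ : Equiv.Perm (Fin n),
      ∏ i, (permMat e * M) i (φ i) = ∏ i, M i ((φ * e⁻¹) i) := by
    intro φ
    rw [← Equiv.prod_comp e (fun i => M i ((φ * e⁻¹) i))]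
    refine Finset.prod_congr rfl fun i _ => ?_
    rw [permMat_mul_apply]
    simp [Equiv.Perm.mul_apply]
  rw [Finset.sum_congr rfl fun φ _ => h φ]
  exact Fintype.sum_equiv (Equiv.mulRight e⁻¹) _ _ (fun φ => rfl)

lemma perm_mul_permMat {n : ℕ} (e : Equiv.Perm (Fin n)) (M : Matrix (Fin n) (Fin n) ℕ) :
    perm (M * permMat e) = perm M := by
  unfold perm
  have h : ∀ φ : Equiv.Perm (Fin n),
      ∏ i, (M * permMat e) i (φ i) = ∏ i, M i ((e⁻¹ * φ) i) := by
    intro φ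
    refine Finset.prod_congr rfl fun i _ => ?_
    rw [mul_permMat_apply]
    rfl
  rw [Finset.sum_congr rfl fun φ _ => h φ]
  exact Fintype.sum_equiv (Equiv.mulLeft e⁻¹) _ _ (fun φ => rfl)

lemma perm_conj {n : ℕ} (u v : Equiv.Perm (Fin n)) (M : Matrix (Fin n) (Fin n) ℕ) :
    perm (permMat u * M * permMat v) = perm M := by
  rw [perm_mul_permMat, perm_permMat_mul]

lemma sum_zeroOne {n : ℕ} (f : Fin n → ℕ) (h01 : ∀ j, f j = 0 ∨ f j = 1) :
    ∑ j, f j = (Finset.univ.filter fun j => f j = 1).card := by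
  rw [Finset.card_filter]
  refine Finset.sum_congr rfl fun j _ => ?_
  rcases h01 j with h | h <;> simp [h]

lemma exists_rep {n : ℕ} (A : Matrix (Fin n) (Fin n) ℕ) (hA : A ∈ Aclass n 2) :
    ∃ σ τ : Equiv.Perm (Fin n), (∀ i, σ i ≠ τ i) ∧
      ∀ i j, A i j = (if j = σ i then 1 else 0) + (if j = τ i then 1 else 0) := by
  obtain ⟨h01, hrow, hcol⟩ := hA
  set t : Fin n → Finset (Fin n) := fun i => Finset.univ.filter fun j => A i j = 1 with ht
  have cardt : ∀ i, (t i).card = 2 := fun i => by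
    rw [← sum_zeroOne _ (fun j => h01 i j), hrow i]
  have cardu : ∀ j, (Finset.univ.filter fun i => A i j = 1).card = 2 := fun j => by
    rw [← sum_zeroOne _ (fun i => h01 i j), hcol j]
  have hall : ∀ s : Finset (Fin n), s.card ≤ (s.biUnion t).card := by
    intro s
    have key : 2 * s.card ≤ 2 * (s.biUnion t).card := by
      calc 2 * s.card = ∑ i ∈ s, (t i).card := by
            rw [Finset.sum_congr rfl fun i _ => cardt i]; simp [mul_comm]
        _ = ∑ i ∈ s, ∑ j ∈ s.biUnion t, (if j ∈ t i then 1 else 0) := by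
            refine Finset.sum_congr rfl fun i hi => ?_
            rw [Finset.sum_ite_mem, Finset.inter_eq_right.mpr (Finset.subset_biUnion_of_mem t hi)]
            simp
        _ = ∑ j ∈ s.biUnion t, ∑ i ∈ s, (if j ∈ t i then 1 else 0) := Finset.sum_comm
        _ ≤ ∑ j ∈ s.biUnion t, 2 := by
            refine Finset.sum_le_sum fun j _ => ?_
            calc ∑ i ∈ s, (if j ∈ t i then 1 else 0)
                ≤ ∑ i : Fin n, (if j ∈ t i then 1 else 0) :=
                  Finset.sum_le_sum_of_subset (Finset.subset_univ s)
              _ = (Finset.univ.filter fun i => A i j = 1).card := by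
                  rw [Finset.card_filter]
                  refine Finset.sum_congr rfl fun i _ => ?_
                  simp [ht]
              _ = 2 := cardu j
        _ = 2 * (s.biUnion t).card := by simp [mul_comm]
    omega
  obtain ⟨f, finj, hf⟩ := (Finset.all_card_le_biUnion_card_iff_exists_injective t).mp hall
  have hf1 : ∀ i, A i (f i) = 1 := fun i => (Finset.mem_filter.mp (hf i)).2
  let σ : Equiv.Perm (Fin n) := Equiv.ofBijective f (Finite.injective_iff_bijective.mp finj)
  have hσ : ∀ i, σ i = f i := fun i => rfl
  have hσ1 : ∀ i, A i (σ i) = 1 := fun i => hf1 i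
  have hσmem : ∀ i, σ i ∈ t i := fun i => hf i
  have hw : ∀ i, ∃ j, (t i).erase (σ i) = {j} := fun i =>
    Finset.card_eq_one.mp (by rw [Finset.card_erase_of_mem (hσmem i), cardt])
  choose τ0 hτ0 using hw
  have hτ0mem : ∀ i, τ0 i ∈ (t i).erase (σ i) := fun i => by
    rw [hτ0 i]; exact Finset.mem_singleton_self _
  have hτ0ne : ∀ i, τ0 i ≠ σ i := fun i => (Finset.mem_erase.mp (hτ0mem i)).1
  have hτ01 : ∀ i, A i (τ0 i) = 1 := fun i =>
    (Finset.mem_filter.mp (Finset.mem_erase.mp (hτ0mem i)).2).2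
  have honly : ∀ i j, A i j = 1 → j = σ i ∨ j = τ0 i := by
    intro i j hj
    by_cases h : j = σ i
    · exact Or.inl h
    · right
      have : j ∈ (t i).erase (σ i) := Finset.mem_erase.mpr ⟨h, by simp [ht, hj]⟩
      rw [hτ0 i] at this
      exact Finset.mem_singleton.mp this
  have hτinj : Function.Injective τ0 := by
    intro i i' hii'
    by_contra hne
    have h1 : A i (τ0 i) = 1 := hτ01 i
    have h2 : A i' (τ0 i) = 1 := by rw [hii']; exact hτ01 i'
    have h3 : A (σ.symm (τ0 i)) (τ0 i) = 1 := by
      have := hσ1 (σ.symm (τ0 i)); rwa [Equiv.apply_symm_apply] at this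
    have hsub : ({i, i'} : Finset (Fin n)) ⊆ Finset.univ.filter fun x => A x (τ0 i) = 1 := by
      intro x hx
      rcases Finset.mem_insert.mp hx with rfl | hx
      · simp [h1]
      · rw [Finset.mem_singleton.mp hx]; simp [h2]
    have heq : ({i, i'} : Finset (Fin n)) = Finset.univ.filter fun x => A x (τ0 i) = 1 :=
      Finset.eq_of_subset_of_card_le hsub (by rw [cardu (τ0 i), Finset.card_pair hne])
    have hmem : σ.symm (τ0 i) ∈ ({i, i'} : Finset (Fin n)) := by rw [heq]; simp [h3]
    rcases Finset.mem_insert.mp hmem with h | h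
    · have : σ i = τ0 i := (congrArg σ h).symm.trans (Equiv.apply_symm_apply σ (τ0 i))
      exact hτ0ne i this.symm
    · rw [Finset.mem_singleton] at h
      have h4 : σ i' = τ0 i := (congrArg σ h).symm.trans (Equiv.apply_symm_apply σ (τ0 i))
      exact hτ0ne i' (hii'.symm.trans h4.symm)
  let τ : Equiv.Perm (Fin n) := Equiv.ofBijective τ0 (Finite.injective_iff_bijective.mp hτinj)
  refine ⟨σ, τ, fun i => (hτ0ne i).symm, fun i j => ?_⟩
  have hτ : τ i = τ0 i := rfl
  by_cases h1 : j = σ i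
  · subst h1
    rw [if_pos rfl, if_neg (by rw [hτ]; exact fun h => hτ0ne i h.symm), hσ1 i]
  · by_cases h2 : j = τ i
    · subst h2
      rw [if_neg h1, if_pos rfl, hτ, hτ01 i]
    · rw [if_neg h1, if_neg h2]
      rcases h01 i j with h | h
      · simpa using h
      · rcases honly i j h with h' | h'
        · exact absurd h' h1
        · exact absurd h' h2

def Gset {n : ℕ} (π : Equiv.Perm (Fin n)) : Finset (Equiv.Perm (Fin n)) :=
  Finset.univ.filter fun g => ∀ j, g j = j ∨ g j = π j

lemma mem_Aclass_of_rep {n : ℕ} (A : Matrix (Fin n) (Fin n) ℕ) (σ τ : Equiv.Perm (Fin n))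
    (hne : ∀ i, σ i ≠ τ i)
    (hrep : ∀ i j, A i j = (if j = σ i then 1 else 0) + (if j = τ i then 1 else 0)) :
    A ∈ Aclass n 2 := by
  refine ⟨fun i j => ?_, fun i => ?_, fun j => ?_⟩
  · rw [hrep]
    by_cases h1 : j = σ i <;> by_cases h2 : j = τ i
    · exact absurd (h1 ▸ h2) (hne i)
    · simp only [h1, h2]; right; simp [h2]; exact fun h => h2 (h1.trans h)
    · simp only [h1, h2]; right; simp [h1]; exact fun h => h1 (h2.trans h)
    · simp [h1, h2]
  · rw [Finset.sum_congr rfl fun j _ => hrep i j, Finset.sum_add_distrib]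
    simp [Finset.sum_ite_eq' Finset.univ]
  · rw [Finset.sum_congr rfl fun i _ => hrep i j, Finset.sum_add_distrib]
    have h1 : ∑ i, (if j = σ i then 1 else 0) = 1 := by
      have : ∀ i : Fin n, (j = σ i) = (i = σ.symm j) := fun i => by
        simp [Equiv.eq_symm_apply, eq_comm]
      simp only [this]
      simp
    have h2 : ∑ i, (if j = τ i then 1 else 0) = 1 := by
      have : ∀ i : Fin n, (j = τ i) = (i = τ.symm j) := fun i => by
        simp [Equiv.eq_symm_apply, eq_comm]
      simp only [this]
      simp
    rw [h1, h2]

lemma perm_eq_card_Gset {n : ℕ} (A : Matrix (Fin n) (Fin n) ℕ) (σ τ : Equiv.Perm (Fin n))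
    (hne : ∀ i, σ i ≠ τ i)
    (hrep : ∀ i j, A i j = (if j = σ i then 1 else 0) + (if j = τ i then 1 else 0)) :
    perm A = (Gset (τ * σ⁻¹)).card := by
  have hval : ∀ φ : Equiv.Perm (Fin n),
      ∏ i, A i (φ i) = if (∀ i, φ i = σ i ∨ φ i = τ i) then 1 else 0 := by
    intro φ
    split_ifs with h
    · refine Finset.prod_eq_one fun i _ => ?_
      rw [hrep]
      rcases h i with h' | h'
      · rw [if_pos h', if_neg (fun hh => hne i (h'.symm.trans hh))]; rfl
      · rw [if_neg (fun hh => hne i (hh.symm.trans h')), if_pos h']; rfl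
    · push_neg at h
      obtain ⟨i, hi1, hi2⟩ := h
      refine Finset.prod_eq_zero (Finset.mem_univ i) ?_
      rw [hrep, if_neg hi1, if_neg hi2]; rfl
  unfold perm
  rw [Finset.sum_congr rfl fun φ _ => hval φ, ← Finset.card_filter]
  refine Finset.card_bij' (fun φ _ => φ * σ⁻¹) (fun g _ => g * σ) ?_ ?_ ?_ ?_
  · intro φ hφ
    rw [Finset.mem_filter] at hφ
    rw [Gset, Finset.mem_filter]
    refine ⟨Finset.mem_univ _, fun j => ?_⟩
    rcases hφ.2 (σ⁻¹ j) with h | h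
    · left; simp only [Equiv.Perm.mul_apply]; rw [h]; exact σ.apply_symm_apply j
    · right; simp only [Equiv.Perm.mul_apply]; rw [h]
  · intro g hg
    rw [Gset, Finset.mem_filter] at hg
    rw [Finset.mem_filter]
    refine ⟨Finset.mem_univ _, fun i => ?_⟩
    rcases hg.2 (σ i) with h | h
    · left; simpa [Equiv.Perm.mul_apply] using h
    · right
      simp only [Equiv.Perm.mul_apply] at h ⊢
      rw [h]
      congr 1
      exact σ.symm_apply_apply i
  · intro φ _; group
  · intro g _; group

lemma prop_pow (π g : Equiv.Perm (Fin n)) (hfpf : ∀ j, π j ≠ j)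
    (hg : ∀ j, g j = j ∨ g j = π j) {j : Fin n} (h : g j = π j) :
    ∀ k : ℕ, g ((π ^ k) j) = π ((π ^ k) j) := by
  intro k
  induction k with
  | zero => simpa using h
  | succ k ih =>
    have h1 : (π ^ (k+1)) j = π ((π ^ k) j) := by
      rw [pow_succ']; rfl
    rw [h1]
    rcases hg (π ((π ^ k) j)) with h2 | h2
    · exfalso
      exact hfpf ((π ^ k) j) (g.injective (h2.trans ih.symm))
    · exact h2

lemma pow_factor_eq (π c : Equiv.Perm (Fin n)) (hc : c ∈ π.cycleFactorsFinset)
    {j : Fin n} (hj : j ∈ c.support) :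
    ∀ k : ℕ, (c ^ k) j ∈ c.support ∧ (c ^ k) j = (π ^ k) j := by
  intro k
  induction k with
  | zero => exact ⟨by simpa using hj, rfl⟩
  | succ k ih =>
    have h1 : (c ^ (k+1)) j = c ((c ^ k) j) := by rw [pow_succ']; rfl
    have h2 : (π ^ (k+1)) j = π ((π ^ k) j) := by rw [pow_succ']; rfl
    constructor
    · rw [h1]; exact Equiv.Perm.apply_mem_support.mpr ih.1
    · rw [h1, h2, (Equiv.Perm.mem_cycleFactorsFinset_iff.mp hc).2 _ ih.1, ih.2]

lemma factor_agree (π c g : Equiv.Perm (Fin n)) (hfpf : ∀ j, π j ≠ j)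
    (hg : ∀ j, g j = j ∨ g j = π j) (hc : c ∈ π.cycleFactorsFinset)
    {j : Fin n} (hj : j ∈ c.support) (h : g j = π j) :
    ∀ x ∈ c.support, g x = π x := by
  intro x hx
  have hcyc := (Equiv.Perm.mem_cycleFactorsFinset_iff.mp hc).1
  have hsc : c.SameCycle j x :=
    hcyc.sameCycle (Equiv.Perm.mem_support.mp hj) (Equiv.Perm.mem_support.mp hx)
  obtain ⟨k, -, hk⟩ := hsc.exists_pow_eq'
  have h2 := (pow_factor_eq π c hc hj k).2
  rw [hk] at h2
  rw [h2]
  exact prop_pow π g hfpf hg h k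

lemma card_Gset (π : Equiv.Perm (Fin n)) (hfpf : ∀ j, π j ≠ j) :
    (Gset π).card = 2 ^ π.cycleType.card := by
  classical
  have hsupp : ∀ c ∈ π.cycleFactorsFinset, ∀ x ∈ Equiv.Perm.support c, π x = c x :=
    fun c hc x hx => ((Equiv.Perm.mem_cycleFactorsFinset_iff.mp hc).2 x hx).symm
  -- the "union of supports" set for T ⊆ factors
  have hinv : ∀ T ⊆ π.cycleFactorsFinset, ∀ j ∈ T.biUnion Equiv.Perm.support,
      π j ∈ T.biUnion Equiv.Perm.support := by
    intro T hT j hj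
    rw [Finset.mem_biUnion] at hj ⊢
    obtain ⟨c, hcT, hjc⟩ := hj
    exact ⟨c, hcT, by rw [hsupp c (hT hcT) j hjc]; exact Equiv.Perm.apply_mem_support.mpr hjc⟩
  -- build the permutation attached to T
  have hbij : ∀ T ⊆ π.cycleFactorsFinset,
      Function.Bijective (fun j => if j ∈ T.biUnion Equiv.Perm.support then π j else j) := by
    intro T hT
    rw [← Finite.injective_iff_bijective]
    intro j₁ j₂ h
    dsimp only at h
    by_cases h1 : j₁ ∈ T.biUnion Equiv.Perm.support <;>
      by_cases h2 : j₂ ∈ T.biUnion Equiv.Perm.support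
    · rw [if_pos h1, if_pos h2] at h; exact π.injective h
    · rw [if_pos h1, if_neg h2] at h
      exact absurd (h ▸ hinv T hT j₁ h1) h2
    · rw [if_neg h1, if_pos h2] at h
      exact absurd (h.symm ▸ hinv T hT j₂ h2) h1
    · rw [if_neg h1, if_neg h2] at h; exact h
  set gT : ∀ T ∈ π.cycleFactorsFinset.powerset, Equiv.Perm (Fin n) :=
    fun T hT => Equiv.ofBijective _ (hbij T (Finset.mem_powerset.mp hT)) with hgT
  have hgT_apply : ∀ T hT j, gT T hT j = if j ∈ T.biUnion Equiv.Perm.support then π j else j :=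
    fun T hT j => rfl
  -- disjointness of supports of distinct factors
  have hdisj : ∀ c ∈ π.cycleFactorsFinset, ∀ c' ∈ π.cycleFactorsFinset, c ≠ c' →
      ∀ j, j ∈ c.support → j ∉ c'.support := by
    intro c hc c' hc' hne j hj hj'
    have := π.cycleFactorsFinset_pairwise_disjoint hc hc' hne
    have hd := Equiv.Perm.Disjoint.disjoint_support this
    exact Finset.disjoint_left.mp hd hj hj'
  -- every point lies in the support of its cycleOf, which is a factor
  have hcycleOf : ∀ j : Fin n, π.cycleOf j ∈ π.cycleFactorsFinset ∧ j ∈ (π.cycleOf j).support := by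
    intro j
    constructor
    · exact Equiv.Perm.cycleOf_mem_cycleFactorsFinset_iff.mpr
        (Equiv.Perm.mem_support.mpr (hfpf j))
    · exact Equiv.Perm.mem_support_cycleOf_iff.mpr
        ⟨Equiv.Perm.SameCycle.refl _ _, Equiv.Perm.mem_support.mpr (hfpf j)⟩
  rw [show (2 : ℕ) ^ π.cycleType.card = 2 ^ π.cycleFactorsFinset.card by
        rw [Equiv.Perm.cycleType_def, Multiset.card_map]; rfl,
      ← Finset.card_powerset]
  refine Finset.card_bij'
    (fun g _ => π.cycleFactorsFinset.filter fun c => ∀ x ∈ c.support, g x = π x)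
    (fun T hT => gT T hT) ?_ ?_ ?_ ?_
  · intro g _
    exact Finset.mem_powerset.mpr (Finset.filter_subset _ _)
  · intro T hT
    rw [Gset, Finset.mem_filter]
    refine ⟨Finset.mem_univ _, fun j => ?_⟩
    rw [hgT_apply T hT j]
    split_ifs
    · right; rfl
    · left; rfl
  · -- left inverse : gT (T g) = g
    intro g hg
    rw [Gset, Finset.mem_filter] at hg
    obtain ⟨-, hg⟩ := hg
    refine Equiv.ext fun j => ?_
    rw [hgT_apply _ (Finset.mem_powerset.mpr (Finset.filter_subset _ _)) j]
    obtain ⟨hcf, hjc⟩ := hcycleOf j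
    by_cases hc : π.cycleOf j ∈ π.cycleFactorsFinset.filter fun c => ∀ x ∈ c.support, g x = π x
    · have hmem : j ∈ (π.cycleFactorsFinset.filter fun c => ∀ x ∈ c.support, g x = π x).biUnion
          Equiv.Perm.support := Finset.mem_biUnion.mpr ⟨_, hc, hjc⟩
      rw [if_pos hmem]
      exact ((Finset.mem_filter.mp hc).2 j hjc).symm
    · have hgj : g j = j := by
        rcases hg j with h | h
        · exact h
        · exfalso
          exact hc (Finset.mem_filter.mpr ⟨hcf, factor_agree π _ g hfpf hg hcf hjc h⟩)
      have hnmem : j ∉ (π.cycleFactorsFinset.filter fun c => ∀ x ∈ c.support, g x = π x).biUnion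
          Equiv.Perm.support := by
        intro hmem
        obtain ⟨c', hc', hjc'⟩ := Finset.mem_biUnion.mp hmem
        have hc'f := (Finset.mem_filter.mp hc').1
        by_cases he : c' = π.cycleOf j
        · exact hc (he ▸ hc')
        · exact hdisj c' hc'f _ hcf he j hjc' hjc
      rw [if_neg hnmem, hgj]
  · -- right inverse : T (gT T) = T
    intro T hT
    have hTsub := Finset.mem_powerset.mp hT
    ext c
    simp only [Finset.mem_filter]
    constructor
    · rintro ⟨hcf, hc⟩
      -- c agrees with π on its support; show c ∈ T
      have hcyc := (Equiv.Perm.mem_cycleFactorsFinset_iff.mp hcf).1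
      obtain ⟨x, hx⟩ := hcyc.nonempty_support
      have := hc x hx
      rw [hgT_apply T hT x] at this
      by_cases hmem : x ∈ T.biUnion Equiv.Perm.support
      · obtain ⟨c', hc', hxc'⟩ := Finset.mem_biUnion.mp hmem
        by_cases he : c = c'
        · exact he ▸ hc'
        · exact absurd hxc' (hdisj c hcf c' (hTsub hc') he x hx)
      · rw [if_neg hmem] at this
        exact absurd this.symm (hfpf x)
    · intro hcT
      refine ⟨hTsub hcT, fun x hx => ?_⟩
      rw [hgT_apply T hT x, if_pos (Finset.mem_biUnion.mpr ⟨c, hcT, hx⟩)]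

lemma support_univ (π : Equiv.Perm (Fin n)) (hfpf : ∀ j, π j ≠ j) :
    π.support = Finset.univ := by
  ext j; simp [Equiv.Perm.mem_support, hfpf j]

lemma sum_cycleType_eq (π : Equiv.Perm (Fin n)) (hfpf : ∀ j, π j ≠ j) :
    π.cycleType.sum = n := by
  rw [Equiv.Perm.sum_cycleType, support_univ π hfpf, Finset.card_univ, Fintype.card_fin]

lemma two_mul_cycleType_card_le (π : Equiv.Perm (Fin n)) (hfpf : ∀ j, π j ≠ j) :
    2 * π.cycleType.card ≤ n := by
  have h := Multiset.card_nsmul_le_sum (s := π.cycleType) (fun x hx => Equiv.Perm.two_le_of_mem_cycleType hx)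
  rw [sum_cycleType_eq π hfpf, smul_eq_mul] at h
  omega

lemma cycleType_card_le (π : Equiv.Perm (Fin n)) (hfpf : ∀ j, π j ≠ j) :
    π.cycleType.card ≤ n / 2 := by
  have := two_mul_cycleType_card_le π hfpf
  omega

lemma invol_cycleType_card (π : Equiv.Perm (Fin n)) (hfpf : ∀ j, π j ≠ j)
    (hinv : ∀ j, π (π j) = j) : 2 * π.cycleType.card = n := by
  have hπ2 : π ^ 2 = 1 := by
    refine Equiv.ext fun j => ?_
    have : (π ^ 2) j = π (π j) := by rw [pow_succ']; rfl
    rw [this, hinv j]; rfl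
  have hord : orderOf π ∣ 2 := orderOf_dvd_of_pow_eq_one hπ2
  have hq : ∀ q ∈ π.cycleType, q = 2 := by
    intro q hq
    have h2 : 2 ≤ q := Equiv.Perm.two_le_of_mem_cycleType hq
    have hdvd : q ∣ 2 := (Equiv.Perm.lcm_cycleType π ▸ Multiset.dvd_lcm hq).trans hord
    have := Nat.le_of_dvd (by norm_num) hdvd
    omega
  have : π.cycleType = Multiset.replicate π.cycleType.card 2 :=
    Multiset.eq_replicate.mpr ⟨rfl, hq⟩
  have hsum := sum_cycleType_eq π hfpf
  rw [this, Multiset.sum_replicate, smul_eq_mul] at hsum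
  omega

lemma even_max_invol (π : Equiv.Perm (Fin n)) (hfpf : ∀ j, π j ≠ j)
    (hcard : 2 * π.cycleType.card = n) : ∀ j, π (π j) = j := by
  have hq : ∀ q ∈ π.cycleType, q = 2 := by
    by_contra h
    push_neg at h
    obtain ⟨q, hq, hne⟩ := h
    have h2 : 2 ≤ q := Equiv.Perm.two_le_of_mem_cycleType hq
    have h3 : 3 ≤ q := by omega
    have hcons : π.cycleType = q ::ₘ π.cycleType.erase q := (Multiset.cons_erase hq).symm
    have herase : 2 * (π.cycleType.erase q).card ≤ (π.cycleType.erase q).sum := by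
      have h5 := Multiset.card_nsmul_le_sum (s := π.cycleType.erase q)
        (fun x hx => Equiv.Perm.two_le_of_mem_cycleType (Multiset.mem_of_mem_erase hx))
      rw [smul_eq_mul] at h5
      omega
    have hsum := sum_cycleType_eq π hfpf
    rw [hcons, Multiset.sum_cons] at hsum
    have hcard2 : Multiset.card π.cycleType = Multiset.card (π.cycleType.erase q) + 1 := by
      conv_lhs => rw [hcons, Multiset.card_cons]
    omega
  have hlcm : π.cycleType.lcm ∣ 2 := Multiset.lcm_dvd.mpr fun q hqm => by rw [hq q hqm]
  rw [Equiv.Perm.lcm_cycleType] at hlcm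
  have hπ2 : π ^ 2 = 1 := orderOf_dvd_iff_pow_eq_one.mp hlcm
  intro j
  have : (π ^ 2) j = π (π j) := by rw [pow_succ']; rfl
  rw [hπ2] at this
  exact this.symm

lemma mem_sameCycle_pow (π : Equiv.Perm (Fin n)) (x : Fin n) (k : ℕ) :
    π.SameCycle x ((π ^ k) x) := ⟨(k : ℤ), by rw [zpow_natCast]⟩

lemma cycleOf_in_factors (π : Equiv.Perm (Fin n)) (hfpf : ∀ j, π j ≠ j) (j : Fin n) :
    π.cycleOf j ∈ π.cycleFactorsFinset ∧ j ∈ (π.cycleOf j).support :=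
  ⟨Equiv.Perm.cycleOf_mem_cycleFactorsFinset_iff.mpr (Equiv.Perm.mem_support.mpr (hfpf j)),
   Equiv.Perm.mem_support_cycleOf_iff.mpr
     ⟨Equiv.Perm.SameCycle.refl _ _, Equiv.Perm.mem_support.mpr (hfpf j)⟩⟩

lemma pow_apply_succ (π : Equiv.Perm (Fin n)) (k : ℕ) (x : Fin n) :
    (π ^ (k+1)) x = π ((π ^ k) x) := by rw [pow_succ']; rfl

-- support of cycleOf for a 2-point orbit

lemma support_cycleOf_pair (π : Equiv.Perm (Fin n)) (hfpf : ∀ j, π j ≠ j) (x : Fin n)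
    (hx2 : π (π x) = x) : (π.cycleOf x).support = {x, π x} := by
  ext y
  rw [Equiv.Perm.mem_support_cycleOf_iff]
  constructor
  · rintro ⟨hsc, -⟩
    obtain ⟨k, -, hk⟩ := hsc.exists_pow_eq'
    have : ∀ m : ℕ, (π ^ m) x = x ∨ (π ^ m) x = π x := by
      intro m
      induction m with
      | zero => left; rfl
      | succ m ih =>
        rw [pow_apply_succ]
        rcases ih with h | h
        · right; rw [h]
        · left; rw [h, hx2]
    rcases this k with h | h <;> rw [← hk, h] <;> simp
  · intro hy
    refine ⟨?_, Equiv.Perm.mem_support.mpr (hfpf x)⟩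
    rcases Finset.mem_insert.mp hy with rfl | hy
    · exact Equiv.Perm.SameCycle.refl _ _
    · rw [Finset.mem_singleton.mp hy]
      exact ⟨(1 : ℤ), by simp⟩

lemma support_cycleOf_triple (π : Equiv.Perm (Fin n)) (hfpf : ∀ j, π j ≠ j) (a : Fin n)
    (ha3 : π (π (π a)) = a) : (π.cycleOf a).support = {a, π a, π (π a)} := by
  ext y
  rw [Equiv.Perm.mem_support_cycleOf_iff]
  constructor
  · rintro ⟨hsc, -⟩
    obtain ⟨k, -, hk⟩ := hsc.exists_pow_eq'
    have : ∀ m : ℕ, (π ^ m) a = a ∨ (π ^ m) a = π a ∨ (π ^ m) a = π (π a) := by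
      intro m
      induction m with
      | zero => left; rfl
      | succ m ih =>
        rw [pow_apply_succ]
        rcases ih with h | h | h
        · right; left; rw [h]
        · right; right; rw [h]
        · left; rw [h, ha3]
    rcases this k with h | h | h <;> rw [← hk, h] <;> simp
  · intro hy
    refine ⟨?_, Equiv.Perm.mem_support.mpr (hfpf a)⟩
    rcases Finset.mem_insert.mp hy with rfl | hy
    · exact Equiv.Perm.SameCycle.refl _ _
    rcases Finset.mem_insert.mp hy with rfl | hy
    · exact ⟨(1 : ℤ), by simp⟩
    · rw [Finset.mem_singleton.mp hy]
      exact ⟨(2 : ℤ), by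
        have : (π ^ (2:ℕ)) a = π (π a) := by rw [pow_apply_succ, pow_apply_succ]; rfl
        rw [← zpow_natCast] at this; exact_mod_cast this⟩

lemma odd_structure_card (π : Equiv.Perm (Fin n)) (hfpf : ∀ j, π j ≠ j) (a : Fin n)
    (ha2 : π (π a) ≠ a) (ha3 : π (π (π a)) = a)
    (hrest : ∀ j, j ≠ a → j ≠ π a → j ≠ π (π a) → π (π j) = j) :
    2 * π.cycleType.card + 1 = n := by
  classical
  have hane : a ≠ π a := fun h => hfpf a h.symm
  have hane2 : a ≠ π (π a) := fun h => ha2 h.symm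
  have hane3 : π a ≠ π (π a) := fun h => hfpf (π a) h.symm
  have hfac : π.cycleFactorsFinset.card = π.cycleType.card := by
    rw [Equiv.Perm.cycleType_def, Multiset.card_map]; rfl
  have hsum : ∑ c ∈ π.cycleFactorsFinset, c.support.card = n := by
    have h1 : π.cycleType.sum = ∑ c ∈ π.cycleFactorsFinset, c.support.card := by
      rw [Equiv.Perm.cycleType_def]
      rfl
    rw [← h1, sum_cycleType_eq π hfpf]
  obtain ⟨hc0f, hc0mem⟩ := cycleOf_in_factors π hfpf a
  have hsupp0 : (π.cycleOf a).support = {a, π a, π (π a)} := support_cycleOf_triple π hfpf a ha3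
  have hcard0 : (π.cycleOf a).support.card = 3 := by
    rw [hsupp0]
    rw [Finset.card_insert_of_notMem (by
          rw [Finset.mem_insert, Finset.mem_singleton]
          rintro (h | h)
          · exact hane h
          · exact hane2 h),
        Finset.card_insert_of_notMem (by
          rw [Finset.mem_singleton]
          exact fun h => hane3 h), Finset.card_singleton]
  have hothers : ∀ c ∈ π.cycleFactorsFinset, c ≠ π.cycleOf a → c.support.card = 2 := by
    intro c hc hne
    have hcyc := (Equiv.Perm.mem_cycleFactorsFinset_iff.mp hc).1
    obtain ⟨x, hx⟩ := hcyc.nonempty_support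
    have hceq : c = π.cycleOf x := Equiv.Perm.cycle_is_cycleOf hx hc
    have hxO : x ≠ a ∧ x ≠ π a ∧ x ≠ π (π a) := by
      refine ⟨?_, ?_, ?_⟩ <;> rintro rfl
      · exact hne (hceq.trans rfl)
      · exact hne (hceq.trans (Equiv.Perm.SameCycle.cycleOf_eq ⟨(1:ℤ), by simp⟩).symm)
      · exact hne (hceq.trans (Equiv.Perm.SameCycle.cycleOf_eq ⟨(2:ℤ), by
          have : (π ^ (2:ℕ)) a = π (π a) := by rw [pow_apply_succ, pow_apply_succ]; rfl
          rw [← zpow_natCast] at this; exact_mod_cast this⟩).symm)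
    have hx2 : π (π x) = x := hrest x hxO.1 hxO.2.1 hxO.2.2
    rw [hceq, support_cycleOf_pair π hfpf x hx2]
    rw [Finset.card_insert_of_notMem (by
          rw [Finset.mem_singleton]
          exact fun h => hfpf x h.symm),
        Finset.card_singleton]
  have herase : ∑ c ∈ π.cycleFactorsFinset.erase (π.cycleOf a), c.support.card
      = 2 * (π.cycleFactorsFinset.card - 1) := by
    rw [Finset.sum_congr rfl (fun c hc => hothers c (Finset.mem_of_mem_erase hc)
      (Finset.ne_of_mem_erase hc))]
    rw [Finset.sum_const, Finset.card_erase_of_mem hc0f, smul_eq_mul]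
    omega
  have hsplit := Finset.add_sum_erase _ (fun c => c.support.card) hc0f
  have hpos : 1 ≤ π.cycleFactorsFinset.card := Finset.card_pos.mpr ⟨_, hc0f⟩
  omega

lemma odd_max_structure (π : Equiv.Perm (Fin n)) (hfpf : ∀ j, π j ≠ j)
    (hcard : 2 * π.cycleType.card + 1 = n) :
    ∃ a : Fin n, π (π a) ≠ a ∧ π (π (π a)) = a ∧
      ∀ j, j ≠ a → j ≠ π a → j ≠ π (π a) → π (π j) = j := by
  classical
  have hfac : π.cycleFactorsFinset.card = π.cycleType.card := by
    rw [Equiv.Perm.cycleType_def, Multiset.card_map]; rfl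
  have hsum : ∑ c ∈ π.cycleFactorsFinset, c.support.card = n := by
    have h1 : π.cycleType.sum = ∑ c ∈ π.cycleFactorsFinset, c.support.card := by
      rw [Equiv.Perm.cycleType_def]; rfl
    rw [← h1, sum_cycleType_eq π hfpf]
  have h2le : ∀ c ∈ π.cycleFactorsFinset, 2 ≤ c.support.card := fun c hc =>
    Equiv.Perm.IsCycle.two_le_card_support (Equiv.Perm.mem_cycleFactorsFinset_iff.mp hc).1
  have hsum1 : ∑ c ∈ π.cycleFactorsFinset, (c.support.card - 2) = 1 := by
    have h1 : ∑ c ∈ π.cycleFactorsFinset, c.support.card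
        = ∑ c ∈ π.cycleFactorsFinset, ((c.support.card - 2) + 2) :=
      Finset.sum_congr rfl fun c hc => by have := h2le c hc; omega
    rw [Finset.sum_add_distrib, Finset.sum_const, smul_eq_mul] at h1
    omega
  -- extract the unique factor with support card 3
  have hex : ∃ c₃ ∈ π.cycleFactorsFinset, 0 < c₃.support.card - 2 := by
    by_contra h
    push_neg at h
    rw [Finset.sum_eq_zero (fun c hc => by have := h c hc; omega)] at hsum1
    omega
  obtain ⟨c₃, hc₃, hc₃pos⟩ := hex
  have hsplit := Finset.add_sum_erase _ (fun c => c.support.card - 2) hc₃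
  have herase0 : ∑ c ∈ π.cycleFactorsFinset.erase c₃, (c.support.card - 2) = 0 := by omega
  have hc₃card : c₃.support.card = 3 := by
    have := h2le c₃ hc₃; omega
  have hothers : ∀ c ∈ π.cycleFactorsFinset, c ≠ c₃ → c.support.card = 2 := by
    intro c hc hne
    have h0 := (Finset.sum_eq_zero_iff.mp herase0) c (Finset.mem_erase.mpr ⟨hne, hc⟩)
    have := h2le c hc; omega
  have hcyc₃ := (Equiv.Perm.mem_cycleFactorsFinset_iff.mp hc₃).1
  obtain ⟨a, ha⟩ := hcyc₃.nonempty_support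
  have hπc : ∀ x ∈ c₃.support, π x = c₃ x := fun x hx =>
    ((Equiv.Perm.mem_cycleFactorsFinset_iff.mp hc₃).2 x hx).symm
  have hord : orderOf c₃ = 3 := by rw [hcyc₃.orderOf, hc₃card]
  have h3 : (π ^ (3:ℕ)) a = a := by
    rw [← (pow_factor_eq π c₃ hc₃ ha 3).2]
    have : c₃ ^ (3:ℕ) = 1 := by rw [← hord]; exact pow_orderOf_eq_one c₃
    rw [this]; rfl
  have ha3 : π (π (π a)) = a := by
    have : (π ^ (3:ℕ)) a = π (π (π a)) := by
      rw [pow_apply_succ, pow_apply_succ, pow_apply_succ]; rfl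
    rw [← this, h3]
  have ha2 : π (π a) ≠ a := by
    intro hx2
    have hsupp : c₃.support ⊆ {a, π a} := by
      intro x hx
      have hsc : c₃.SameCycle a x :=
        hcyc₃.sameCycle (Equiv.Perm.mem_support.mp ha) (Equiv.Perm.mem_support.mp hx)
      obtain ⟨k, -, hk⟩ := hsc.exists_pow_eq'
      have hkk : (π ^ k) a = x := by rw [← (pow_factor_eq π c₃ hc₃ ha k).2, hk]
      have : ∀ m : ℕ, (π ^ m) a = a ∨ (π ^ m) a = π a := by
        intro m
        induction m with
        | zero => left; rfl
        | succ m ih =>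
          rw [pow_apply_succ]
          rcases ih with h | h
          · right; rw [h]
          · left; rw [h, hx2]
      rcases this k with h | h <;> rw [← hkk, h] <;> simp
    have := Finset.card_le_card hsupp
    have hle : ({a, π a} : Finset (Fin n)).card ≤ 2 := Finset.card_insert_le _ _ |>.trans (by simp)
    omega
  refine ⟨a, ha2, ha3, fun j hj1 hj2 hj3 => ?_⟩
  -- identify support c₃ with the orbit
  have hmem3 : {a, π a, π (π a)} ⊆ c₃.support := by
    intro x hx
    have hπa : π a ∈ c₃.support := by
      rw [hπc a ha]; exact Equiv.Perm.apply_mem_support.mpr ha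
    have hπ2a : π (π a) ∈ c₃.support := by
      rw [hπc _ hπa]; exact Equiv.Perm.apply_mem_support.mpr hπa
    rcases Finset.mem_insert.mp hx with rfl | hx
    · exact ha
    rcases Finset.mem_insert.mp hx with rfl | hx
    · exact hπa
    · rw [Finset.mem_singleton.mp hx]; exact hπ2a
  have hjnot : j ∉ c₃.support := by
    intro hj
    have hcard3 : ({a, π a, π (π a)} : Finset (Fin n)).card = 3 := by
      rw [Finset.card_insert_of_notMem (by
            rw [Finset.mem_insert, Finset.mem_singleton]
            rintro (h | h)
            · exact hfpf a h.symm
            · exact ha2 h.symm),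
          Finset.card_insert_of_notMem (by
            rw [Finset.mem_singleton]
            exact fun h => hfpf (π a) h.symm),
          Finset.card_singleton]
    have heq : {a, π a, π (π a)} = c₃.support :=
      Finset.eq_of_subset_of_card_le hmem3 (by omega)
    rw [← heq] at hj
    simp only [Finset.mem_insert, Finset.mem_singleton] at hj
    tauto
  obtain ⟨hcf, hcmem⟩ := cycleOf_in_factors π hfpf j
  have hne : π.cycleOf j ≠ c₃ := by
    intro h
    exact hjnot (h ▸ hcmem)
  have hcard2 : (π.cycleOf j).support.card = 2 := hothers _ hcf hne
  have hordj : orderOf (π.cycleOf j) = 2 := by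
    rw [(Equiv.Perm.mem_cycleFactorsFinset_iff.mp hcf).1.orderOf, hcard2]
  have h2 : (π ^ (2:ℕ)) j = j := by
    rw [← (pow_factor_eq π (π.cycleOf j) hcf hcmem 2).2]
    have : (π.cycleOf j) ^ (2:ℕ) = 1 := by rw [← hordj]; exact pow_orderOf_eq_one _
    rw [this]; rfl
  have : (π ^ (2:ℕ)) j = π (π j) := by rw [pow_apply_succ, pow_apply_succ]; rfl
  rw [← this, h2]

lemma blockIdx_replicate_two : ∀ (m i : ℕ), i < 2 * m → blockIdx (List.replicate m 2) i = i / 2 := by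
  intro m
  induction m with
  | zero => intro i hi; omega
  | succ m ih =>
    intro i hi
    rw [List.replicate_succ, blockIdx]
    by_cases h : i < 2
    · rw [if_pos h]; omega
    · rw [if_neg h, ih (i - 2) (by omega)]
      omega

def pairFun (n : ℕ) (hn : 2 ∣ n) : Fin n → Fin n := fun i =>
  if h : (i : ℕ) % 2 = 0 then ⟨(i : ℕ) + 1, by have := i.isLt; omega⟩
  else ⟨(i : ℕ) - 1, by have := i.isLt; omega⟩

lemma pairFun_val (n : ℕ) (hn : 2 ∣ n) (i : Fin n) :
    ((pairFun n hn i : Fin n) : ℕ) = if (i : ℕ) % 2 = 0 then (i : ℕ) + 1 else (i : ℕ) - 1 := by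
  unfold pairFun
  split_ifs <;> rfl

lemma pairFun_invol (n : ℕ) (hn : 2 ∣ n) : Function.Involutive (pairFun n hn) := by
  intro i
  apply Fin.ext
  rw [pairFun_val, pairFun_val]
  have := i.isLt
  split_ifs <;> omega

def pairPerm (n : ℕ) (hn : 2 ∣ n) : Equiv.Perm (Fin n) :=
  Function.Involutive.toPerm _ (pairFun_invol n hn)

lemma pairPerm_val (n : ℕ) (hn : 2 ∣ n) (i : Fin n) :
    ((pairPerm n hn i : Fin n) : ℕ) = if (i : ℕ) % 2 = 0 then (i : ℕ) + 1 else (i : ℕ) - 1 :=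
  pairFun_val n hn i

lemma pairPerm_ne (n : ℕ) (hn : 2 ∣ n) (i : Fin n) : (1 : Equiv.Perm (Fin n)) i ≠ pairPerm n hn i := by
  intro h
  have hv := congrArg (fun x : Fin n => (x : ℕ)) h
  simp only [Equiv.Perm.one_apply] at hv
  rw [pairPerm_val] at hv
  have := i.isLt
  split_ifs at hv <;> omega

lemma listBlocks_rep (n : ℕ) (hn : 2 ∣ n) (i j : Fin n) :
    listBlocks n (List.replicate (n / 2) 2) i j =
      (if j = (1 : Equiv.Perm (Fin n)) i then 1 else 0) +
      (if j = pairPerm n hn i then 1 else 0) := by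
  have hi := i.isLt
  have hj := j.isLt
  have h2 : 2 * (n / 2) = n := by omega
  rw [listBlocks]
  simp only [Matrix.of_apply, Equiv.Perm.one_apply]
  rw [blockIdx_replicate_two _ _ (by omega), blockIdx_replicate_two _ _ (by omega)]
  have hpv := pairPerm_val n hn i
  by_cases hji : j = i
  · subst hji
    rw [if_pos rfl]
    show 1 = (if j = j then 1 else 0) + (if j = pairPerm n hn j then 1 else 0)
    simp only [if_pos (rfl : j = j), if_neg (fun h : j = pairPerm n hn j => pairPerm_ne n hn j (by simpa using h)), if_true, Nat.add_zero]
  · have hjiv : (j : ℕ) ≠ (i : ℕ) := fun h => hji (Fin.ext h)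
    by_cases hjp : j = pairPerm n hn i
    · have hjpv : (j : ℕ) = if (i : ℕ) % 2 = 0 then (i : ℕ) + 1 else (i : ℕ) - 1 := by
        rw [hjp, hpv]
      rw [if_pos (by split_ifs at hjpv <;> omega)]
      show 1 = (if j = i then 1 else 0) + (if j = pairPerm n hn i then 1 else 0)
      simp only [if_neg hji, if_pos hjp]
    · have hjpv : (j : ℕ) ≠ if (i : ℕ) % 2 = 0 then (i : ℕ) + 1 else (i : ℕ) - 1 := by
        intro h
        exact hjp (Fin.ext (by rw [hpv]; exact h))
      rw [if_neg (by split_ifs at hjpv <;> omega)]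
      show 0 = (if j = i then 1 else 0) + (if j = pairPerm n hn i then 1 else 0)
      simp only [if_neg hji, if_neg hjp]

def oddσfun (n : ℕ) (hn3 : 3 ≤ n) : Fin n → Fin n := fun j =>
  if h : (j : ℕ) < 3 then ⟨((j : ℕ) + 1) % 3, by omega⟩ else j

def oddτfun (n : ℕ) (hn3 : 3 ≤ n) (hodd : ¬ 2 ∣ n) : Fin n → Fin n := fun j =>
  if h : (j : ℕ) < 3 then ⟨((j : ℕ) + 2) % 3, by omega⟩
  else if h2 : ((j : ℕ) - 3) % 2 = 0 then ⟨(j : ℕ) + 1, by have := j.isLt; omega⟩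
  else ⟨(j : ℕ) - 1, by have := j.isLt; omega⟩

lemma oddσfun_val (n : ℕ) (hn3 : 3 ≤ n) (j : Fin n) :
    (oddσfun n hn3 j : ℕ) = if (j : ℕ) < 3 then ((j : ℕ) + 1) % 3 else (j : ℕ) := by
  unfold oddσfun; split_ifs <;> rfl

lemma oddτfun_val (n : ℕ) (hn3 : 3 ≤ n) (hodd : ¬ 2 ∣ n) (j : Fin n) :
    (oddτfun n hn3 hodd j : ℕ) = if (j : ℕ) < 3 then ((j : ℕ) + 2) % 3
      else if ((j : ℕ) - 3) % 2 = 0 then (j : ℕ) + 1 else (j : ℕ) - 1 := by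
  unfold oddτfun; split_ifs <;> rfl

lemma oddσfun_inj (n : ℕ) (hn3 : 3 ≤ n) : Function.Injective (oddσfun n hn3) := by
  intro a b h
  have hv := congrArg (fun x : Fin n => (x : ℕ)) h
  simp only [oddσfun_val] at hv
  have ha := a.isLt
  have hb := b.isLt
  apply Fin.ext
  split_ifs at hv <;> omega

lemma oddτfun_inj (n : ℕ) (hn3 : 3 ≤ n) (hodd : ¬ 2 ∣ n) :
    Function.Injective (oddτfun n hn3 hodd) := by
  intro a b h
  have hv := congrArg (fun x : Fin n => (x : ℕ)) h
  simp only [oddτfun_val] at hv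
  have ha := a.isLt
  have hb := b.isLt
  apply Fin.ext
  split_ifs at hv <;> omega

noncomputable def oddσ (n : ℕ) (hn3 : 3 ≤ n) : Equiv.Perm (Fin n) :=
  Equiv.ofBijective _ (Finite.injective_iff_bijective.mp (oddσfun_inj n hn3))

noncomputable def oddτ (n : ℕ) (hn3 : 3 ≤ n) (hodd : ¬ 2 ∣ n) : Equiv.Perm (Fin n) :=
  Equiv.ofBijective _ (Finite.injective_iff_bijective.mp (oddτfun_inj n hn3 hodd))

lemma oddσ_val (n : ℕ) (hn3 : 3 ≤ n) (j : Fin n) :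
    ((oddσ n hn3 j : Fin n) : ℕ) = if (j : ℕ) < 3 then ((j : ℕ) + 1) % 3 else (j : ℕ) :=
  oddσfun_val n hn3 j

lemma oddτ_val (n : ℕ) (hn3 : 3 ≤ n) (hodd : ¬ 2 ∣ n) (j : Fin n) :
    ((oddτ n hn3 hodd j : Fin n) : ℕ) = if (j : ℕ) < 3 then ((j : ℕ) + 2) % 3
      else if ((j : ℕ) - 3) % 2 = 0 then (j : ℕ) + 1 else (j : ℕ) - 1 :=
  oddτfun_val n hn3 hodd j

lemma oddσ_symm_val (n : ℕ) (hn3 : 3 ≤ n) (j : Fin n) :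
    ((oddσ n hn3)⁻¹ j : ℕ) = if (j : ℕ) < 3 then ((j : ℕ) + 2) % 3 else (j : ℕ) := by
  have hj := j.isLt
  have hx : ((if (j : ℕ) < 3 then ((j : ℕ) + 2) % 3 else (j : ℕ)) : ℕ) < n := by
    split_ifs <;> omega
  have key : oddσ n hn3 ⟨_, hx⟩ = j := by
    apply Fin.ext
    rw [oddσ_val]
    simp only []
    split_ifs <;> omega
  have heq : (oddσ n hn3)⁻¹ j = ⟨_, hx⟩ := by
    conv_lhs => rw [← key]
    exact Equiv.symm_apply_apply _ _
  rw [heq]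

noncomputable def oddπ (n : ℕ) (hn3 : 3 ≤ n) (hodd : ¬ 2 ∣ n) : Equiv.Perm (Fin n) :=
  oddτ n hn3 hodd * (oddσ n hn3)⁻¹

lemma oddπ_val (n : ℕ) (hn3 : 3 ≤ n) (hodd : ¬ 2 ∣ n) (j : Fin n) :
    ((oddπ n hn3 hodd j : Fin n) : ℕ) = if (j : ℕ) < 3 then ((j : ℕ) + 1) % 3
      else if ((j : ℕ) - 3) % 2 = 0 then (j : ℕ) + 1 else (j : ℕ) - 1 := by
  have hj := j.isLt
  unfold oddπ
  rw [Equiv.Perm.mul_apply, oddτ_val]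
  have h1 := oddσ_symm_val n hn3 j
  by_cases h : (j : ℕ) < 3
  · rw [if_pos h] at h1
    rw [if_pos h]
    rw [h1]
    rw [if_pos (by omega)]
    omega
  · rw [if_neg h] at h1
    rw [if_neg h, h1, if_neg h]

lemma oddπ_fpf (n : ℕ) (hn3 : 3 ≤ n) (hodd : ¬ 2 ∣ n) (j : Fin n) :
    oddπ n hn3 hodd j ≠ j := by
  intro h
  have hv := congrArg (fun x : Fin n => (x : ℕ)) h
  simp only [oddπ_val] at hv
  have hj := j.isLt
  split_ifs at hv <;> omega

lemma odd_ne (n : ℕ) (hn3 : 3 ≤ n) (hodd : ¬ 2 ∣ n) (i : Fin n) :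
    oddσ n hn3 i ≠ oddτ n hn3 hodd i := by
  intro h
  have hv := congrArg (fun x : Fin n => (x : ℕ)) h
  simp only [oddσ_val, oddτ_val] at hv
  have hi := i.isLt
  split_ifs at hv <;> omega

lemma odd_rep (n : ℕ) (hn3 : 3 ≤ n) (hodd : ¬ 2 ∣ n) (i j : Fin n) :
    headBlocks n J3mI3 (List.replicate ((n-3)/2) 2) i j =
      (if j = oddσ n hn3 i then 1 else 0) + (if j = oddτ n hn3 hodd i then 1 else 0) := by
  have hi := i.isLt
  have hj := j.isLt
  have hσv := oddσ_val n hn3 i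
  have hτv := oddτ_val n hn3 hodd i
  have hm : 2 * ((n-3)/2) = n - 3 := by omega
  rw [headBlocks]
  simp only [Matrix.of_apply]
  by_cases hA : (i : ℕ) < 3 ∧ (j : ℕ) < 3
  · rw [dif_pos hA]
    have hJ : J3mI3 ⟨(i:ℕ), hA.1⟩ ⟨(j:ℕ), hA.2⟩ = if (i:ℕ) = (j:ℕ) then 0 else 1 := by
      rw [J3mI3]
      simp only [Matrix.of_apply, Fin.mk.injEq]
    rw [hJ]
    rw [if_pos hA.1] at hσv hτv
    by_cases c1 : (j:ℕ) = ((i:ℕ)+1)%3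
    · rw [if_neg (by omega : ¬ (i:ℕ) = (j:ℕ)),
          if_pos (Fin.ext_iff.mpr (by rw [hσv]; exact c1)),
          if_neg (fun h => by rw [Fin.ext_iff, hτv] at h; omega)]
    · by_cases c2 : (j:ℕ) = ((i:ℕ)+2)%3
      · rw [if_neg (by omega : ¬ (i:ℕ) = (j:ℕ)),
            if_neg (fun h => by rw [Fin.ext_iff, hσv] at h; omega),
            if_pos (Fin.ext_iff.mpr (by rw [hτv]; exact c2))]
      · rw [if_pos (by omega : (i:ℕ) = (j:ℕ)),
            if_neg (fun h => by rw [Fin.ext_iff, hσv] at h; omega),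
            if_neg (fun h => by rw [Fin.ext_iff, hτv] at h; omega)]
  · rw [dif_neg hA]
    by_cases hi3 : (i : ℕ) < 3
    · -- then j ≥ 3
      have hj3 : 3 ≤ (j : ℕ) := by omega
      rw [if_pos hi3] at hσv hτv
      rw [if_neg (by omega : ¬ (3 ≤ (i:ℕ) ∧ 3 ≤ (j:ℕ) ∧
            blockIdx (List.replicate ((n-3)/2) 2) ((i:ℕ) - 3)
              = blockIdx (List.replicate ((n-3)/2) 2) ((j:ℕ) - 3))),
          if_neg (fun h => by rw [Fin.ext_iff, hσv] at h; omega),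
          if_neg (fun h => by rw [Fin.ext_iff, hτv] at h; omega)]
    · have hi3' : 3 ≤ (i : ℕ) := by omega
      rw [if_neg hi3] at hσv hτv
      by_cases hj3 : (j : ℕ) < 3
      · rw [if_neg (by omega : ¬ (3 ≤ (i:ℕ) ∧ 3 ≤ (j:ℕ) ∧
              blockIdx (List.replicate ((n-3)/2) 2) ((i:ℕ) - 3)
                = blockIdx (List.replicate ((n-3)/2) 2) ((j:ℕ) - 3))),
            if_neg (fun h => by rw [Fin.ext_iff, hσv] at h; omega),
            if_neg (fun h => by rw [Fin.ext_iff, hτv] at h; split_ifs at h <;> omega)]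
      · have hj3' : 3 ≤ (j : ℕ) := by omega
        rw [blockIdx_replicate_two _ _ (by omega), blockIdx_replicate_two _ _ (by omega)]
        by_cases c1 : j = i
        · subst c1
          rw [if_pos (by omega), if_pos (Fin.ext_iff.mpr (by rw [hσv])),
              if_neg (fun h => by rw [Fin.ext_iff, hτv] at h; split_ifs at h <;> omega)]
        · have c1v : (j:ℕ) ≠ (i:ℕ) := fun h => c1 (Fin.ext h)
          by_cases c2 : (j:ℕ) = (if ((i:ℕ)-3)%2 = 0 then (i:ℕ)+1 else (i:ℕ)-1)
          · rw [if_pos (by split_ifs at c2 <;> omega),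
                if_neg (fun h => by rw [Fin.ext_iff, hσv] at h; omega),
                if_pos (Fin.ext_iff.mpr (by rw [hτv]; exact c2))]
          · rw [if_neg (by split_ifs at c2 <;> omega),
                if_neg (fun h => by rw [Fin.ext_iff, hσv] at h; omega),
                if_neg (fun h => by rw [Fin.ext_iff, hτv] at h; exact c2 h)]

lemma oddπ_structure (n : ℕ) (hn3 : 3 ≤ n) (hodd : ¬ 2 ∣ n) :
    ∃ a : Fin n, (oddπ n hn3 hodd) ((oddπ n hn3 hodd) a) ≠ a ∧
      (oddπ n hn3 hodd) ((oddπ n hn3 hodd) ((oddπ n hn3 hodd) a)) = a ∧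
      ∀ j, j ≠ a → j ≠ (oddπ n hn3 hodd) a → j ≠ (oddπ n hn3 hodd) ((oddπ n hn3 hodd) a) →
        (oddπ n hn3 hodd) ((oddπ n hn3 hodd) j) = j := by
  set π := oddπ n hn3 hodd with hπ
  refine ⟨⟨0, by omega⟩, ?_, ?_, ?_⟩ <;>
    [skip; skip; skip]
  case _ =>
    intro h
    have hv := congrArg (fun x : Fin n => (x : ℕ)) h
    simp only [hπ, oddπ_val] at hv
    norm_num at hv
  case _ =>
    apply Fin.ext
    simp only [hπ, oddπ_val]
    norm_num
  case _ =>
    intro j hj1 hj2 hj3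
    have hj := j.isLt
    have h0 : ((⟨0, by omega⟩ : Fin n) : ℕ) = 0 := rfl
    have h1 : ((π ⟨0, by omega⟩ : Fin n) : ℕ) = 1 := by
      simp only [hπ, oddπ_val]; norm_num
    have h2 : ((π (π ⟨0, by omega⟩) : Fin n) : ℕ) = 2 := by
      simp only [hπ, oddπ_val]
      norm_num
    have hjv : 3 ≤ (j : ℕ) := by
      rcases Nat.lt_or_ge (j : ℕ) 3 with h | h
      · exfalso
        have hv : (j:ℕ) = 0 ∨ (j:ℕ) = 1 ∨ (j:ℕ) = 2 := by omega
        rcases hv with hv | hv | hv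
        · exact hj1 (Fin.ext (by rw [h0]; exact hv))
        · exact hj2 (Fin.ext (by rw [h1]; exact hv))
        · exact hj3 (Fin.ext (by rw [h2]; exact hv))
      · exact h
    apply Fin.ext
    have hπj : ((π j : Fin n) : ℕ)
        = if ((j:ℕ)-3) % 2 = 0 then (j:ℕ)+1 else (j:ℕ)-1 := by
      simp only [hπ, oddπ_val]
      rw [if_neg (by omega)]
    have hπj3 : 3 ≤ ((π j : Fin n) : ℕ) := by rw [hπj]; split_ifs <;> omega
    have := oddπ_val n hn3 hodd (π j)
    rw [← hπ] at this
    rw [this, if_neg (by omega), hπj]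
    split_ifs <;> omega

lemma construct_even {n : ℕ} (hn2 : 2 ∣ n) (σ τ : Equiv.Perm (Fin n))
    (hne : ∀ i, σ i ≠ τ i) (hinv : ∀ j, (τ * σ⁻¹) ((τ * σ⁻¹) j) = j)
    (A : Matrix (Fin n) (Fin n) ℕ)
    (hrep : ∀ i j, A i j = (if j = σ i then 1 else 0) + (if j = τ i then 1 else 0)) :
    ∃ P Q, IsPermMatrix P ∧ IsPermMatrix Q ∧
      P * A * Q = listBlocks n (List.replicate (n / 2) 2) := by
  classical
  set π := τ * σ⁻¹ with hπdef
  have hfpf : ∀ j, π j ≠ j := by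
    intro j h
    have h1 : π j = τ (σ⁻¹ j) := rfl
    have h2 : σ (σ⁻¹ j) = j := Equiv.apply_symm_apply σ j
    apply hne (σ⁻¹ j)
    rw [h2, ← h1, h]
  have hfpfv : ∀ j : Fin n, (j : ℕ) ≠ ((π j : Fin n) : ℕ) :=
    fun j h => hfpf j (Fin.ext h.symm)
  set S : Finset (Fin n) := Finset.univ.filter (fun j => (j:ℕ) < ((π j : Fin n) : ℕ)) with hS
  have hmemS : ∀ j, j ∈ S ↔ (j:ℕ) < ((π j : Fin n) : ℕ) := by
    intro j; rw [hS, Finset.mem_filter]; simp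
  have hcards : S.card = n / 2 := by
    have hbij : S.card = (Finset.univ.filter
        (fun j : Fin n => ¬ (j:ℕ) < ((π j : Fin n) : ℕ))).card := by
      refine Finset.card_bij (fun j _ => π j) ?_ ?_ ?_
      · intro j hj
        rw [hmemS] at hj
        refine Finset.mem_filter.mpr ⟨Finset.mem_univ _, ?_⟩
        show ¬ ((π j : Fin n) : ℕ) < ((π (π j) : Fin n) : ℕ)
        rw [hinv j]
        omega
      · intro u hu v hv h
        exact π.injective h
      · intro j' hj'
        rw [Finset.mem_filter] at hj'
        have hj'2 := hfpfv j'
        refine ⟨π j', ?_, (hinv j')⟩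
        rw [hmemS, hinv j']
        omega
    have hsplit := Finset.card_filter_add_card_filter_not
      (s := (Finset.univ : Finset (Fin n)))
      (p := fun j : Fin n => (j:ℕ) < ((π j : Fin n) : ℕ))
    rw [Finset.card_univ, Fintype.card_fin, ← hS] at hsplit
    omega
  have hdlt : ∀ i : Fin n, (i:ℕ)/2 < n/2 := fun i => Nat.div_lt_div_of_lt_of_dvd hn2 i.isLt
  set r : Fin (n/2) → Fin n := fun k => ((S.orderIsoOfFin hcards) k : Fin n) with hr
  have hrS : ∀ k, r k ∈ S := fun k => ((S.orderIsoOfFin hcards) k).2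
  have hrinj : Function.Injective r :=
    fun u v h => (S.orderIsoOfFin hcards).injective (Subtype.coe_injective h)
  have hrlt : ∀ k, ((r k : Fin n):ℕ) < ((π (r k) : Fin n):ℕ) := fun k => (hmemS _).mp (hrS k)
  have hπr_not : ∀ k k', r k ≠ π (r k') := by
    intro k k' h
    have h1 := hrlt k'
    have h2 := hrlt k
    have h3 : π (r k) = r k' := by rw [h, hinv]
    rw [← h] at h1
    rw [h3] at h2
    omega
  set F : Fin n → Fin n := fun i =>
    if (i:ℕ) % 2 = 0 then r ⟨(i:ℕ)/2, hdlt i⟩ else π (r ⟨(i:ℕ)/2, hdlt i⟩) with hF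
  have hFinj : Function.Injective F := by
    intro i i' h
    simp only [hF] at h
    by_cases p1 : (i:ℕ)%2 = 0 <;> by_cases p2 : (i':ℕ)%2 = 0
    · rw [if_pos p1, if_pos p2] at h
      have h2 := congrArg Fin.val (hrinj h)
      simp only at h2
      apply Fin.ext; omega
    · rw [if_pos p1, if_neg p2] at h
      exact absurd h (hπr_not _ _)
    · rw [if_neg p1, if_pos p2] at h
      exact absurd h.symm (hπr_not _ _)
    · rw [if_neg p1, if_neg p2] at h
      have h2 := congrArg Fin.val (hrinj (π.injective h))
      simp only at h2
      apply Fin.ext; omega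
  set e : Equiv.Perm (Fin n) := Equiv.ofBijective F (Finite.injective_iff_bijective.mp hFinj)
    with he
  refine ⟨permMat (e.trans σ.symm), permMat e.symm, isPermMatrix_permMat _,
    isPermMatrix_permMat _, ?_⟩
  ext i j
  rw [permMat_mul_mul_apply]
  have hstep : A ((e.trans σ.symm) i) (e.symm.symm j) = A (σ.symm (F i)) (F j) := rfl
  rw [hstep, hrep]
  rw [Equiv.apply_symm_apply σ (F i),
      (show τ ((Equiv.symm σ) (F i)) = π (F i) from rfl), listBlocks]
  simp only [Matrix.of_apply]
  rw [blockIdx_replicate_two _ _ (by have := i.isLt; omega),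
      blockIdx_replicate_two _ _ (by have := j.isLt; omega)]
  have hFi : F i = r ⟨(i:ℕ)/2, hdlt i⟩ ∨ F i = π (r ⟨(i:ℕ)/2, hdlt i⟩) := by
    simp only [hF]; split_ifs <;> simp
  have hFj : F j = r ⟨(j:ℕ)/2, hdlt j⟩ ∨ F j = π (r ⟨(j:ℕ)/2, hdlt j⟩) := by
    simp only [hF]; split_ifs <;> simp
  by_cases hk : (i:ℕ)/2 = (j:ℕ)/2
  · rw [if_pos hk]
    have hkk : (⟨(j:ℕ)/2, hdlt j⟩ : Fin (n/2)) = ⟨(i:ℕ)/2, hdlt i⟩ := Fin.ext hk.symm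
    by_cases hp : (i:ℕ)%2 = (j:ℕ)%2
    · have hij : i = j := by apply Fin.ext; omega
      subst hij
      rw [if_pos rfl, if_neg (fun h => hfpf (F i) h.symm)]
    · by_cases p1 : (i:ℕ)%2 = 0
      · have p2 : ¬ (j:ℕ)%2 = 0 := fun h => hp (by omega)
        have hFi' : F i = r ⟨(i:ℕ)/2, hdlt i⟩ := by simp only [hF]; rw [if_pos p1]
        have hFj' : F j = π (r ⟨(i:ℕ)/2, hdlt i⟩) := by
          simp only [hF]; rw [if_neg p2, hkk]
        rw [if_neg (by rw [hFi', hFj']; exact fun h => hπr_not _ _ h.symm),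
            if_pos (by rw [hFi', hFj'])]
      · have p2 : (j:ℕ)%2 = 0 := by omega
        have hFi' : F i = π (r ⟨(i:ℕ)/2, hdlt i⟩) := by simp only [hF]; rw [if_neg p1]
        have hFj' : F j = r ⟨(i:ℕ)/2, hdlt i⟩ := by
          simp only [hF]; rw [if_pos p2, hkk]
        rw [if_neg (by rw [hFi', hFj']; exact hπr_not _ _),
            if_pos (by rw [hFi', hFj', hinv])]
  · rw [if_neg hk]
    have hkk : (⟨(j:ℕ)/2, hdlt j⟩ : Fin (n/2)) ≠ ⟨(i:ℕ)/2, hdlt i⟩ := by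
      intro h
      exact hk (congrArg Fin.val h).symm
    have hd1 : r ⟨(j:ℕ)/2, hdlt j⟩ ≠ r ⟨(i:ℕ)/2, hdlt i⟩ := fun h => hkk (hrinj h)
    have hd2 : r ⟨(j:ℕ)/2, hdlt j⟩ ≠ π (r ⟨(i:ℕ)/2, hdlt i⟩) := hπr_not _ _
    have hd3 : π (r ⟨(j:ℕ)/2, hdlt j⟩) ≠ r ⟨(i:ℕ)/2, hdlt i⟩ := fun h => hπr_not _ _ h.symm
    have hd4 : π (r ⟨(j:ℕ)/2, hdlt j⟩) ≠ π (r ⟨(i:ℕ)/2, hdlt i⟩) :=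
      fun h => hkk (hrinj (π.injective h))
    have hπFi : π (F i) = r ⟨(i:ℕ)/2, hdlt i⟩ ∨ π (F i) = π (r ⟨(i:ℕ)/2, hdlt i⟩) := by
      rcases hFi with h | h
      · right; rw [h]
      · left; rw [h, hinv]
    rw [if_neg (by rcases hFj with h | h <;> rcases hFi with h' | h' <;>
          rw [h, h'] <;> assumption),
        if_neg (by rcases hFj with h | h <;> rcases hπFi with h' | h' <;>
          rw [h, h'] <;> assumption)]

lemma construct_odd {n : ℕ} (hn3 : 3 ≤ n) (hodd : ¬ 2 ∣ n) (σ τ : Equiv.Perm (Fin n))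
    (hne : ∀ i, σ i ≠ τ i) (a : Fin n)
    (ha2 : (τ * σ⁻¹) ((τ * σ⁻¹) a) ≠ a)
    (ha3 : (τ * σ⁻¹) ((τ * σ⁻¹) ((τ * σ⁻¹) a)) = a)
    (hrest : ∀ j, j ≠ a → j ≠ (τ * σ⁻¹) a → j ≠ (τ * σ⁻¹) ((τ * σ⁻¹) a) →
      (τ * σ⁻¹) ((τ * σ⁻¹) j) = j)
    (A : Matrix (Fin n) (Fin n) ℕ)
    (hrep : ∀ i j, A i j = (if j = σ i then 1 else 0) + (if j = τ i then 1 else 0)) :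
    ∃ P Q, IsPermMatrix P ∧ IsPermMatrix Q ∧
      P * A * Q = headBlocks n J3mI3 (List.replicate ((n - 3) / 2) 2) := by
  classical
  set π := τ * σ⁻¹ with hπdef
  have hfpf : ∀ j, π j ≠ j := by
    intro j h
    have h1 : π j = τ (σ⁻¹ j) := rfl
    have h2 : σ (σ⁻¹ j) = j := Equiv.apply_symm_apply σ j
    apply hne (σ⁻¹ j)
    rw [h2, ← h1, h]
  have hfpfv : ∀ j : Fin n, (j : ℕ) ≠ ((π j : Fin n) : ℕ) :=
    fun j h => hfpf j (Fin.ext h.symm)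
  have hb01 : a ≠ π a := fun h => hfpf a h.symm
  have hb02 : a ≠ π (π a) := fun h => ha2 h.symm
  have hb12 : π a ≠ π (π a) := fun h => hfpf (π a) h.symm
  have hπb2 : π (π (π a)) = a := ha3
  set pnot : Fin n → Prop := fun j => j ≠ a ∧ j ≠ π a ∧ j ≠ π (π a) with hpnot
  have hOinv : ∀ j, pnot j → pnot (π j) := by
    rintro j ⟨h1, h2, h3⟩
    refine ⟨fun h => h3 ?_, fun h => h1 ?_, fun h => h2 ?_⟩
    · exact π.injective (h.trans hπb2.symm)
    · exact π.injective h
    · exact π.injective h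
  have hOclose : ∀ x : Fin n, (x = a ∨ x = π a ∨ x = π (π a)) →
      (π x = a ∨ π x = π a ∨ π x = π (π a)) := by
    rintro x (rfl | rfl | rfl)
    · right; left; rfl
    · right; right; rfl
    · left; exact hπb2
  have hno : ∀ x y : Fin n, pnot x → (y = a ∨ y = π a ∨ y = π (π a)) → x ≠ y := by
    rintro x y hx (rfl | rfl | rfl)
    exacts [hx.1, hx.2.1, hx.2.2]
  have hπinvT : ∀ j, pnot j → π (π j) = j := fun j hj => hrest j hj.1 hj.2.1 hj.2.2
  set S0 : Finset (Fin n) := Finset.univ.filter pnot with hS0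
  have hmemS0 : ∀ j, j ∈ S0 ↔ pnot j := by
    intro j; rw [hS0, Finset.mem_filter]; simp
  set S : Finset (Fin n) := S0.filter (fun j : Fin n => (j:ℕ) < ((π j : Fin n) : ℕ)) with hS
  have hmemS : ∀ j, j ∈ S ↔ pnot j ∧ (j:ℕ) < ((π j : Fin n) : ℕ) := by
    intro j; rw [hS, Finset.mem_filter, hmemS0]
  have hcardS0 : S0.card = n - 3 := by
    have hcompl : S0 = ({a, π a, π (π a)} : Finset (Fin n))ᶜ := by
      ext x
      rw [hmemS0, Finset.mem_compl, Finset.mem_insert, Finset.mem_insert,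
        Finset.mem_singleton, hpnot]
      push_neg
      rfl
    have hc3 : ({a, π a, π (π a)} : Finset (Fin n)).card = 3 := by
      rw [Finset.card_insert_of_notMem (by
            rw [Finset.mem_insert, Finset.mem_singleton]
            rintro (h | h)
            exacts [hb01 h, hb02 h]),
          Finset.card_insert_of_notMem (by
            rw [Finset.mem_singleton]
            exact fun h => hb12 h), Finset.card_singleton]
    rw [hcompl, Finset.card_compl, hc3, Fintype.card_fin]
  have hcards : S.card = (n - 3) / 2 := by
    have hbij : S.card
        = (S0.filter (fun j : Fin n => ¬ (j:ℕ) < ((π j : Fin n) : ℕ))).card := by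
      refine Finset.card_bij (fun j _ => π j) ?_ ?_ ?_
      · intro j hj
        rw [hmemS] at hj
        refine Finset.mem_filter.mpr ⟨(hmemS0 _).mpr (hOinv j hj.1), ?_⟩
        show ¬ ((π j : Fin n) : ℕ) < ((π (π j) : Fin n) : ℕ)
        rw [hπinvT j hj.1]
        omega
      · intro u hu v hv h
        exact π.injective h
      · intro j' hj'
        rw [Finset.mem_filter, hmemS0] at hj'
        have hj'2 := hfpfv j'
        refine ⟨π j', ?_, hπinvT j' hj'.1⟩
        rw [hmemS]
        refine ⟨hOinv j' hj'.1, ?_⟩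
        rw [hπinvT j' hj'.1]
        omega
    have hsplit := Finset.card_filter_add_card_filter_not
      (s := S0) (p := fun j : Fin n => (j:ℕ) < ((π j : Fin n) : ℕ))
    rw [← hS] at hsplit
    omega
  have hdlt : ∀ i : Fin n, ¬ (i:ℕ) < 3 → ((i:ℕ)-3)/2 < (n-3)/2 := fun i h =>
    Nat.div_lt_div_of_lt_of_dvd (by omega) (by have := i.isLt; omega)
  set r : Fin ((n-3)/2) → Fin n := fun k => ((S.orderIsoOfFin hcards) k : Fin n) with hr
  have hrS : ∀ k, r k ∈ S := fun k => ((S.orderIsoOfFin hcards) k).2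
  have hrinj : Function.Injective r :=
    fun u v h => (S.orderIsoOfFin hcards).injective (Subtype.coe_injective h)
  have hrP : ∀ k, pnot (r k) := fun k => ((hmemS _).mp (hrS k)).1
  have hrlt : ∀ k, ((r k : Fin n):ℕ) < ((π (r k) : Fin n):ℕ) := fun k =>
    ((hmemS _).mp (hrS k)).2
  have hπrP : ∀ k, pnot (π (r k)) := fun k => hOinv _ (hrP k)
  have hinvr : ∀ k, π (π (r k)) = r k := fun k => hπinvT _ (hrP k)
  have hπr_not : ∀ k k', r k ≠ π (r k') := by
    intro k k' h
    have h1 := hrlt k'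
    have h2 := hrlt k
    have h3 : π (r k) = r k' := by rw [h, hinvr]
    rw [← h] at h1
    rw [h3] at h2
    omega
  set t : ∀ i : Fin n, ¬ (i:ℕ) < 3 → Fin n := fun i h =>
    if ((i:ℕ)-3) % 2 = 0 then r ⟨((i:ℕ)-3)/2, hdlt i h⟩
    else π (r ⟨((i:ℕ)-3)/2, hdlt i h⟩) with ht
  have htval : ∀ (i : Fin n) (h : ¬ (i:ℕ) < 3),
      t i h = r ⟨((i:ℕ)-3)/2, hdlt i h⟩ ∨ t i h = π (r ⟨((i:ℕ)-3)/2, hdlt i h⟩) := by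
    intro i h
    simp only [ht]
    split_ifs <;> simp
  have htP : ∀ (i : Fin n) (h : ¬ (i:ℕ) < 3), pnot (t i h) := by
    intro i h
    rcases htval i h with h1 | h1 <;> rw [h1]
    exacts [hrP _, hπrP _]
  have htinj : ∀ (i i' : Fin n) (h : ¬ (i:ℕ) < 3) (h' : ¬ (i':ℕ) < 3),
      t i h = t i' h' → i = i' := by
    intro i i' h h' heq
    simp only [ht] at heq
    by_cases p1 : ((i:ℕ)-3)%2 = 0 <;> by_cases p2 : ((i':ℕ)-3)%2 = 0
    · rw [if_pos p1, if_pos p2] at heq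
      have h2 := congrArg Fin.val (hrinj heq)
      simp only at h2
      apply Fin.ext; omega
    · rw [if_pos p1, if_neg p2] at heq
      exact absurd heq (hπr_not _ _)
    · rw [if_neg p1, if_pos p2] at heq
      exact absurd heq.symm (hπr_not _ _)
    · rw [if_neg p1, if_neg p2] at heq
      have h2 := congrArg Fin.val (hrinj (π.injective heq))
      simp only at h2
      apply Fin.ext; omega
  set F : Fin n → Fin n := fun j =>
    if h : (j:ℕ) < 3 then (if (j:ℕ) = 0 then π (π a) else if (j:ℕ) = 1 then a else π a)
    else t j h with hF
  set G : Fin n → Fin n := fun i =>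
    if h : (i:ℕ) < 3 then (if (i:ℕ) = 0 then a else if (i:ℕ) = 1 then π a else π (π a))
    else t i h with hG
  have hFhead : ∀ (x : Fin n) (hx : (x:ℕ) < 3),
      F x = if (x:ℕ) = 0 then π (π a) else if (x:ℕ) = 1 then a else π a := by
    intro x hx; simp only [hF]; rw [dif_pos hx]
  have hGhead : ∀ (x : Fin n) (hx : (x:ℕ) < 3),
      G x = if (x:ℕ) = 0 then a else if (x:ℕ) = 1 then π a else π (π a) := by
    intro x hx; simp only [hG]; rw [dif_pos hx]
  have hFtail : ∀ (x : Fin n) (hx : ¬ (x:ℕ) < 3), F x = t x hx := by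
    intro x hx; simp only [hF]; rw [dif_neg hx]
  have hGtail : ∀ (x : Fin n) (hx : ¬ (x:ℕ) < 3), G x = t x hx := by
    intro x hx; simp only [hG]; rw [dif_neg hx]
  have hF0 : ∀ x : Fin n, (x:ℕ) = 0 → F x = π (π a) := by
    intro x hv; rw [hFhead x (by omega)]; simp [hv]
  have hF1 : ∀ x : Fin n, (x:ℕ) = 1 → F x = a := by
    intro x hv; rw [hFhead x (by omega)]; simp [hv]
  have hF2 : ∀ x : Fin n, (x:ℕ) = 2 → F x = π a := by
    intro x hv; rw [hFhead x (by omega)]; simp [hv]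
  have hG0 : ∀ x : Fin n, (x:ℕ) = 0 → G x = a := by
    intro x hv; rw [hGhead x (by omega)]; simp [hv]
  have hG1 : ∀ x : Fin n, (x:ℕ) = 1 → G x = π a := by
    intro x hv; rw [hGhead x (by omega)]; simp [hv]
  have hG2 : ∀ x : Fin n, (x:ℕ) = 2 → G x = π (π a) := by
    intro x hv; rw [hGhead x (by omega)]; simp [hv]
  have hFO : ∀ (x : Fin n), (x:ℕ) < 3 → (F x = a ∨ F x = π a ∨ F x = π (π a)) := by
    intro x hx
    have hv : (x:ℕ) = 0 ∨ (x:ℕ) = 1 ∨ (x:ℕ) = 2 := by omega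
    rcases hv with hv | hv | hv
    · rw [hF0 x hv]; tauto
    · rw [hF1 x hv]; tauto
    · rw [hF2 x hv]; tauto
  have hGO : ∀ (x : Fin n), (x:ℕ) < 3 → (G x = a ∨ G x = π a ∨ G x = π (π a)) := by
    intro x hx
    have hv : (x:ℕ) = 0 ∨ (x:ℕ) = 1 ∨ (x:ℕ) = 2 := by omega
    rcases hv with hv | hv | hv
    · rw [hG0 x hv]; tauto
    · rw [hG1 x hv]; tauto
    · rw [hG2 x hv]; tauto
  have hinjF : Function.Injective F := by
    intro i i' heq
    by_cases h1 : (i:ℕ) < 3 <;> by_cases h2 : (i':ℕ) < 3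
    · have hv1 : (i:ℕ) = 0 ∨ (i:ℕ) = 1 ∨ (i:ℕ) = 2 := by omega
      have hv2 : (i':ℕ) = 0 ∨ (i':ℕ) = 1 ∨ (i':ℕ) = 2 := by omega
      rcases hv1 with hv1 | hv1 | hv1 <;> rcases hv2 with hv2 | hv2 | hv2
      · exact Fin.ext (by omega)
      · rw [hF0 i hv1, hF1 i' hv2] at heq; exact absurd heq (fun h => hb02 h.symm)
      · rw [hF0 i hv1, hF2 i' hv2] at heq; exact absurd heq (fun h => hb12 h.symm)
      · rw [hF1 i hv1, hF0 i' hv2] at heq; exact absurd heq hb02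
      · exact Fin.ext (by omega)
      · rw [hF1 i hv1, hF2 i' hv2] at heq; exact absurd heq hb01
      · rw [hF2 i hv1, hF0 i' hv2] at heq; exact absurd heq hb12
      · rw [hF2 i hv1, hF1 i' hv2] at heq; exact absurd heq (fun h => hb01 h.symm)
      · exact Fin.ext (by omega)
    · rw [hFtail i' h2] at heq
      exact absurd rfl (hno _ _ (heq ▸ htP i' h2) (hFO i h1))
    · rw [hFtail i h1] at heq
      exact absurd heq (hno _ _ (htP i h1) (hFO i' h2))
    · rw [hFtail i h1, hFtail i' h2] at heq
      exact htinj i i' h1 h2 heq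
  have hinjG : Function.Injective G := by
    intro i i' heq
    by_cases h1 : (i:ℕ) < 3 <;> by_cases h2 : (i':ℕ) < 3
    · have hv1 : (i:ℕ) = 0 ∨ (i:ℕ) = 1 ∨ (i:ℕ) = 2 := by omega
      have hv2 : (i':ℕ) = 0 ∨ (i':ℕ) = 1 ∨ (i':ℕ) = 2 := by omega
      rcases hv1 with hv1 | hv1 | hv1 <;> rcases hv2 with hv2 | hv2 | hv2
      · exact Fin.ext (by omega)
      · rw [hG0 i hv1, hG1 i' hv2] at heq; exact absurd heq hb01
      · rw [hG0 i hv1, hG2 i' hv2] at heq; exact absurd heq hb02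
      · rw [hG1 i hv1, hG0 i' hv2] at heq; exact absurd heq (fun h => hb01 h.symm)
      · exact Fin.ext (by omega)
      · rw [hG1 i hv1, hG2 i' hv2] at heq; exact absurd heq hb12
      · rw [hG2 i hv1, hG0 i' hv2] at heq; exact absurd heq (fun h => hb02 h.symm)
      · rw [hG2 i hv1, hG1 i' hv2] at heq; exact absurd heq (fun h => hb12 h.symm)
      · exact Fin.ext (by omega)
    · rw [hGtail i' h2] at heq
      exact absurd rfl (hno _ _ (heq ▸ htP i' h2) (hGO i h1))
    · rw [hGtail i h1] at heq
      exact absurd heq (hno _ _ (htP i h1) (hGO i' h2))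
    · rw [hGtail i h1, hGtail i' h2] at heq
      exact htinj i i' h1 h2 heq
  set eF : Equiv.Perm (Fin n) := Equiv.ofBijective F (Finite.injective_iff_bijective.mp hinjF)
    with heF
  set eG : Equiv.Perm (Fin n) := Equiv.ofBijective G (Finite.injective_iff_bijective.mp hinjG)
    with heG
  refine ⟨permMat (eG.trans σ.symm), permMat eF.symm, isPermMatrix_permMat _,
    isPermMatrix_permMat _, ?_⟩
  ext i j
  rw [permMat_mul_mul_apply]
  have hstep : A ((eG.trans σ.symm) i) (eF.symm.symm j) = A (σ.symm (G i)) (F j) := rfl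
  rw [hstep, hrep, Equiv.apply_symm_apply σ (G i),
      (show τ ((Equiv.symm σ) (G i)) = π (G i) from rfl), headBlocks]
  simp only [Matrix.of_apply]
  by_cases h1 : (i:ℕ) < 3 <;> by_cases h2 : (j:ℕ) < 3
  · -- head × head
    rw [dif_pos ⟨h1, h2⟩]
    have hJ : J3mI3 ⟨(i:ℕ), h1⟩ ⟨(j:ℕ), h2⟩ = if (i:ℕ) = (j:ℕ) then 0 else 1 := by
      rw [J3mI3]; simp only [Matrix.of_apply, Fin.mk.injEq]
    rw [hJ]
    have hv1 : (i:ℕ) = 0 ∨ (i:ℕ) = 1 ∨ (i:ℕ) = 2 := by omega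
    have hv2 : (j:ℕ) = 0 ∨ (j:ℕ) = 1 ∨ (j:ℕ) = 2 := by omega
    rcases hv1 with hv1 | hv1 | hv1 <;> rcases hv2 with hv2 | hv2 | hv2
    · rw [hG0 i hv1, hF0 j hv2, if_pos (show (i:ℕ) = (j:ℕ) by omega),
          if_neg (show π (π a) ≠ a from fun h => hb02 h.symm),
          if_neg (show π (π a) ≠ π a from fun h => hb12 h.symm)]
    · rw [hG0 i hv1, hF1 j hv2, if_neg (show ¬ (i:ℕ) = (j:ℕ) by omega),
          if_pos rfl, if_neg hb01]
    · rw [hG0 i hv1, hF2 j hv2, if_neg (show ¬ (i:ℕ) = (j:ℕ) by omega),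
          if_neg (show π a ≠ a from fun h => hb01 h.symm), if_pos rfl]
    · rw [hG1 i hv1, hF0 j hv2, if_neg (show ¬ (i:ℕ) = (j:ℕ) by omega),
          if_neg (show π (π a) ≠ π a from fun h => hb12 h.symm), if_pos rfl]
    · rw [hG1 i hv1, hF1 j hv2, if_pos (show (i:ℕ) = (j:ℕ) by omega),
          if_neg hb01, if_neg hb02]
    · rw [hG1 i hv1, hF2 j hv2, if_neg (show ¬ (i:ℕ) = (j:ℕ) by omega),
          if_pos rfl, if_neg hb12]
    · rw [hG2 i hv1, hF0 j hv2, if_neg (show ¬ (i:ℕ) = (j:ℕ) by omega), hπb2,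
          if_pos rfl, if_neg (show π (π a) ≠ a from fun h => hb02 h.symm)]
    · rw [hG2 i hv1, hF1 j hv2, if_neg (show ¬ (i:ℕ) = (j:ℕ) by omega), hπb2,
          if_neg hb02, if_pos rfl]
    · rw [hG2 i hv1, hF2 j hv2, if_pos (show (i:ℕ) = (j:ℕ) by omega), hπb2,
          if_neg hb12, if_neg (show π a ≠ a from fun h => hb01 h.symm)]
  · -- head row, tail column
    rw [hFtail j h2,
        if_neg (hno _ _ (htP j h2) (hGO i h1)),
        if_neg (hno _ _ (htP j h2) (hOclose _ (hGO i h1))),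
        dif_neg (show ¬ ((i:ℕ) < 3 ∧ (j:ℕ) < 3) from fun hcon => h2 hcon.2),
        if_neg (show ¬ (3 ≤ (i:ℕ) ∧ 3 ≤ (j:ℕ) ∧
            blockIdx (List.replicate ((n-3)/2) 2) ((i:ℕ)-3)
              = blockIdx (List.replicate ((n-3)/2) 2) ((j:ℕ)-3)) from
          fun hcon => (show ¬ 3 ≤ (i:ℕ) by omega) hcon.1)]
  · -- tail row, head column
    rw [hGtail i h1,
        if_neg (show F j ≠ t i h1 from fun h => hno _ _ (htP i h1) (hFO j h2) h.symm),
        if_neg (show F j ≠ π (t i h1) from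
          fun h => hno _ _ (hOinv _ (htP i h1)) (hFO j h2) h.symm),
        dif_neg (show ¬ ((i:ℕ) < 3 ∧ (j:ℕ) < 3) from fun hcon => h1 hcon.1),
        if_neg (show ¬ (3 ≤ (i:ℕ) ∧ 3 ≤ (j:ℕ) ∧
            blockIdx (List.replicate ((n-3)/2) 2) ((i:ℕ)-3)
              = blockIdx (List.replicate ((n-3)/2) 2) ((j:ℕ)-3)) from
          fun hcon => (show ¬ 3 ≤ (j:ℕ) by omega) hcon.2.1)]
  · -- tail × tail
    rw [dif_neg (show ¬ ((i:ℕ) < 3 ∧ (j:ℕ) < 3) from fun hcon => h1 hcon.1),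
        hFtail j h2, hGtail i h1,
        blockIdx_replicate_two _ _ (by have := i.isLt; omega),
        blockIdx_replicate_two _ _ (by have := j.isLt; omega)]
    have hki := hdlt i h1
    have hkj := hdlt j h2
    have hti := htval i h1
    have htj := htval j h2
    have hπti : π (t i h1) = r ⟨((i:ℕ)-3)/2, hki⟩ ∨ π (t i h1) = π (r ⟨((i:ℕ)-3)/2, hki⟩) := by
      rcases hti with h | h
      · right; rw [h]
      · left; rw [h, hinvr]
    by_cases hk : ((i:ℕ)-3)/2 = ((j:ℕ)-3)/2
    · rw [if_pos (show 3 ≤ (i:ℕ) ∧ 3 ≤ (j:ℕ) ∧ ((i:ℕ)-3)/2 = ((j:ℕ)-3)/2 by omega)]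
      have hkk : (⟨((j:ℕ)-3)/2, hkj⟩ : Fin ((n-3)/2)) = ⟨((i:ℕ)-3)/2, hki⟩ := Fin.ext hk.symm
      by_cases hp : ((i:ℕ)-3)%2 = ((j:ℕ)-3)%2
      · have hij : i = j := by apply Fin.ext; omega
        subst hij
        rw [if_pos rfl, if_neg (show t i h1 ≠ π (t i h1) from fun h => hfpf (t i h1) h.symm)]
      · by_cases p1 : ((i:ℕ)-3)%2 = 0
        · have p2 : ¬ ((j:ℕ)-3)%2 = 0 := fun h => hp (by omega)
          have hti' : t i h1 = r ⟨((i:ℕ)-3)/2, hki⟩ := by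
            simp only [ht]; rw [if_pos p1]
          have htj' : t j h2 = π (r ⟨((i:ℕ)-3)/2, hki⟩) := by
            simp only [ht]; rw [if_neg p2, hkk]
          rw [if_neg (show t j h2 ≠ t i h1 from by
                rw [hti', htj']; exact fun h => hπr_not _ _ h.symm),
              if_pos (show t j h2 = π (t i h1) from by rw [hti', htj'])]
        · have p2 : ((j:ℕ)-3)%2 = 0 := by omega
          have hti' : t i h1 = π (r ⟨((i:ℕ)-3)/2, hki⟩) := by
            simp only [ht]; rw [if_neg p1]
          have htj' : t j h2 = r ⟨((i:ℕ)-3)/2, hki⟩ := by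
            simp only [ht]; rw [if_pos p2, hkk]
          rw [if_neg (show t j h2 ≠ t i h1 from by rw [hti', htj']; exact hπr_not _ _),
              if_pos (show t j h2 = π (t i h1) from by rw [hti', htj', hinvr])]
    · rw [if_neg (show ¬ (3 ≤ (i:ℕ) ∧ 3 ≤ (j:ℕ) ∧ ((i:ℕ)-3)/2 = ((j:ℕ)-3)/2) by omega)]
      have hkk : (⟨((j:ℕ)-3)/2, hkj⟩ : Fin ((n-3)/2)) ≠ ⟨((i:ℕ)-3)/2, hki⟩ := by
        intro h
        exact hk (congrArg Fin.val h).symm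
      have hd1 : r ⟨((j:ℕ)-3)/2, hkj⟩ ≠ r ⟨((i:ℕ)-3)/2, hki⟩ := fun h => hkk (hrinj h)
      have hd2 : r ⟨((j:ℕ)-3)/2, hkj⟩ ≠ π (r ⟨((i:ℕ)-3)/2, hki⟩) := hπr_not _ _
      have hd3 : π (r ⟨((j:ℕ)-3)/2, hkj⟩) ≠ r ⟨((i:ℕ)-3)/2, hki⟩ := fun h => hπr_not _ _ h.symm
      have hd4 : π (r ⟨((j:ℕ)-3)/2, hkj⟩) ≠ π (r ⟨((i:ℕ)-3)/2, hki⟩) :=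
        fun h => hkk (hrinj (π.injective h))
      rw [if_neg (show t j h2 ≠ t i h1 from by
            rcases htj with h | h <;> rcases hti with h' | h' <;>
            rw [h, h'] <;> assumption),
          if_neg (show t j h2 ≠ π (t i h1) from by
            rcases htj with h | h <;> rcases hπti with h' | h' <;>
            rw [h, h'] <;> assumption)]

lemma fpf_of_rep {n : ℕ} (σ τ : Equiv.Perm (Fin n)) (hne : ∀ i, σ i ≠ τ i) :
    ∀ j, (τ * σ⁻¹) j ≠ j := by
  intro j h
  have h1 : (τ * σ⁻¹) j = τ (σ⁻¹ j) := rfl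
  have h2 : σ (σ⁻¹ j) = j := Equiv.apply_symm_apply σ j
  apply hne (σ⁻¹ j)
  rw [h2, ← h1, h]

lemma perm_le_bound {n : ℕ} (B : Matrix (Fin n) (Fin n) ℕ) (hB : B ∈ Aclass n 2) :
    perm B ≤ 2 ^ (n / 2) := by
  obtain ⟨σ, τ, hne, hrep⟩ := exists_rep B hB
  have hfpf := fpf_of_rep σ τ hne
  rw [perm_eq_card_Gset B σ τ hne hrep, card_Gset _ hfpf]
  exact Nat.pow_le_pow_right (by norm_num) (cycleType_card_le _ hfpf)

lemma canonical_even {n : ℕ} (hn2 : 2 ∣ n) :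
    listBlocks n (List.replicate (n / 2) 2) ∈ Aclass n 2 ∧
    perm (listBlocks n (List.replicate (n / 2) 2)) = 2 ^ (n / 2) := by
  have hne : ∀ i, (1 : Equiv.Perm (Fin n)) i ≠ pairPerm n hn2 i := pairPerm_ne n hn2
  have hrep := listBlocks_rep n hn2
  constructor
  · exact mem_Aclass_of_rep _ _ _ hne hrep
  · rw [perm_eq_card_Gset _ _ _ hne hrep]
    have h1 : pairPerm n hn2 * (1 : Equiv.Perm (Fin n))⁻¹ = pairPerm n hn2 := by group
    rw [h1]
    have hfpf : ∀ j, pairPerm n hn2 j ≠ j := fun j h => pairPerm_ne n hn2 j h.symm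
    rw [card_Gset _ hfpf]
    have hinvol : ∀ j, pairPerm n hn2 (pairPerm n hn2 j) = j := pairFun_invol n hn2
    have := invol_cycleType_card _ hfpf hinvol
    congr 1
    omega

lemma canonical_odd {n : ℕ} (hn3 : 3 ≤ n) (hodd : ¬ 2 ∣ n) :
    headBlocks n J3mI3 (List.replicate ((n - 3) / 2) 2) ∈ Aclass n 2 ∧
    perm (headBlocks n J3mI3 (List.replicate ((n - 3) / 2) 2)) = 2 ^ (n / 2) := by
  have hne := odd_ne n hn3 hodd
  have hrep := odd_rep n hn3 hodd
  constructor
  · exact mem_Aclass_of_rep _ _ _ hne hrep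
  · rw [perm_eq_card_Gset _ _ _ hne hrep,
        (show oddτ n hn3 hodd * (oddσ n hn3)⁻¹ = oddπ n hn3 hodd from rfl)]
    have hfpf := oddπ_fpf n hn3 hodd
    rw [card_Gset _ hfpf]
    obtain ⟨a, ha2, ha3, hrest⟩ := oddπ_structure n hn3 hodd
    have := odd_structure_card _ hfpf a ha2 ha3 hrest
    congr 1
    omega
end Aux

theorem stmt16 (n : ℕ) (hn : 2 ≤ n) (A : Matrix (Fin n) (Fin n) ℕ)
    (hA : A ∈ Aclass n 2) :
    (∀ B ∈ Aclass n 2, perm B ≤ perm A) ↔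
      ∃ P Q, IsPermMatrix P ∧ IsPermMatrix Q ∧
        ((Even n ∧ P * A * Q = listBlocks n (List.replicate (n / 2) 2)) ∨
         (¬ Even n ∧ P * A * Q = headBlocks n J3mI3 (List.replicate ((n - 3) / 2) 2))) := by
  obtain ⟨σ, τ, hne, hrep⟩ := exists_rep A hA
  have hfpf := fpf_of_rep σ τ hne
  have hpermA : perm A = 2 ^ (Multiset.card (τ * σ⁻¹).cycleType) := by
    rw [perm_eq_card_Gset A σ τ hne hrep, card_Gset _ hfpf]
  constructor
  · intro hmax
    by_cases hev : 2 ∣ n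
    · obtain ⟨hmem, hval⟩ := canonical_even (n := n) hev
      have hge : 2 ^ (n / 2) ≤ perm A := hval ▸ hmax _ hmem
      have hle : Multiset.card (τ * σ⁻¹).cycleType ≤ n / 2 := cycleType_card_le _ hfpf
      have h1 : perm A ≤ 2 ^ (n / 2) := by
        rw [hpermA]
        exact Nat.pow_le_pow_right (by norm_num) hle
      have h3 : Multiset.card (τ * σ⁻¹).cycleType = n / 2 :=
        Nat.pow_right_injective (le_refl 2) (hpermA.symm.trans (le_antisymm h1 hge))
      have hcards : 2 * Multiset.card (τ * σ⁻¹).cycleType = n := by omega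
      have hinv := even_max_invol _ hfpf hcards
      obtain ⟨P, Q, hP, hQ, hPQ⟩ := construct_even hev σ τ hne hinv A hrep
      exact ⟨P, Q, hP, hQ, Or.inl ⟨⟨n / 2, by omega⟩, hPQ⟩⟩
    · have hn3 : 3 ≤ n := by
        rcases Nat.lt_or_ge n 3 with h | h
        · exfalso; apply hev; omega
        · exact h
      obtain ⟨hmem, hval⟩ := canonical_odd hn3 hev
      have hge : 2 ^ (n / 2) ≤ perm A := hval ▸ hmax _ hmem
      have hle : Multiset.card (τ * σ⁻¹).cycleType ≤ n / 2 := cycleType_card_le _ hfpf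
      have h1 : perm A ≤ 2 ^ (n / 2) := by
        rw [hpermA]
        exact Nat.pow_le_pow_right (by norm_num) hle
      have h3 : Multiset.card (τ * σ⁻¹).cycleType = n / 2 :=
        Nat.pow_right_injective (le_refl 2) (hpermA.symm.trans (le_antisymm h1 hge))
      have hcards : 2 * Multiset.card (τ * σ⁻¹).cycleType + 1 = n := by omega
      obtain ⟨a, ha2, ha3, hrest⟩ := odd_max_structure _ hfpf hcards
      obtain ⟨P, Q, hP, hQ, hPQ⟩ := construct_odd hn3 hev σ τ hne a ha2 ha3 hrest A hrep
      refine ⟨P, Q, hP, hQ, Or.inr ⟨?_, hPQ⟩⟩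
      rintro ⟨k, hk⟩
      exact hev ⟨k, by omega⟩
  · rintro ⟨P, Q, hP, hQ, hor⟩
    obtain ⟨u, hu⟩ := hP
    obtain ⟨v, hv⟩ := hQ
    have hPu : P = permMat u := by
      ext i j
      rw [hu i j]
      rfl
    have hQv : Q = permMat v := by
      ext i j
      rw [hv i j]
      rfl
    have hAval : ∀ C : Matrix (Fin n) (Fin n) ℕ, P * A * Q = C → perm A = perm C := by
      intro C hC
      rw [← hC, hPu, hQv, perm_conj]
    rcases hor with ⟨hev, hPQ⟩ | ⟨hodd', hPQ⟩
    · have h2 : 2 ∣ n := by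
        rcases hev with ⟨k, hk⟩
        exact ⟨k, by omega⟩
      obtain ⟨hmem, hval⟩ := canonical_even h2
      have hA' : perm A = 2 ^ (n / 2) := by rw [hAval _ hPQ, hval]
      intro B hB
      rw [hA']
      exact perm_le_bound B hB
    · have h2 : ¬ 2 ∣ n := by
        intro ⟨k, hk⟩
        exact hodd' ⟨k, by omega⟩
      have hn3 : 3 ≤ n := by
        rcases Nat.lt_or_ge n 3 with h | h
        · exfalso; apply h2; omega
        · exact h
      obtain ⟨hmem, hval⟩ := canonical_odd hn3 h2
      have hA' : perm A = 2 ^ (n / 2) := by rw [hAval _ hPQ, hval]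
      intro B hB
      rw [hA']
      exact perm_le_bound B hB


end BGM
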